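/- arXiv:1701.05380 — 4 statements merged into one kernel-verified Lean document; each statement's English description precedes it below -/
import Mathlib

section
/- Let (Ω, 𝒜, P) be a probability space, (S, 𝔖) and (T, 𝔗) measurable spaces, and (X, Y) : Ω → S × T a measurable pair such that the joint law P_{(X,Y)} is absolutely continuous with respect to the product measure P_X ⊗ P_Y with Radon–Nikodým derivative g satisfying ‖g‖_{∞, P_X⊗P_Y} < ∞. Let p, q ∈ [1, ∞] be Hölder conjugate (1/p + 1/q = 1) and let h : S × T → ℝ be measurable with ‖h‖_{p, P_X⊗P_Y} = E[ E[|h(X,y)|^p]|_{y=Y} ]^{1/p} < ∞. Then |∫_{S×T} h dP_{(X,Y)} − ∫_{S×T} h d(P_X ⊗ P_Y)| ≤ 2^{1/q} (1 + ‖g‖_{∞, P_X⊗P_Y})^{1/p} ‖h‖_{p, P_X⊗P_Y} β(X,Y)^{1/q}. -/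
open MeasureTheory Real Filter Set
open scoped ENNReal NNReal symmDiff

/-- β-mixing coefficient between two sub-σ-algebras. -/
noncomputable def betaMix {Ω : Type*} [MeasurableSpace Ω] (P : Measure Ω)
    (F G : MeasurableSpace Ω) : ℝ :=
  (1 / 2) * sSup { r : ℝ | ∃ (n m : ℕ) (U : Fin n → Set Ω) (V : Fin m → Set Ω),
      (∀ i, MeasurableSet[F] (U i)) ∧ (∀ j, MeasurableSet[G] (V j)) ∧
      Pairwise (Function.onFun Disjoint U) ∧ Pairwise (Function.onFun Disjoint V) ∧
      (⋃ i, U i) = Set.univ ∧ (⋃ j, V j) = Set.univ ∧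
      r = ∑ i, ∑ j, |(P (U i ∩ V j)).toReal - (P (U i)).toReal * (P (V j)).toReal| }

/-- β-mixing coefficient of two random variables. -/
noncomputable def betaRV {Ω S T : Type*} [MeasurableSpace Ω] [MeasurableSpace S]
    [MeasurableSpace T] (P : Measure Ω) (X : Ω → S) (Y : Ω → T) : ℝ :=
  betaMix P (MeasurableSpace.comap X inferInstance) (MeasurableSpace.comap Y inferInstance)

/-- β-mixing coefficients of a process indexed by ℤ. -/
noncomputable def betaProc {Ω S : Type*} [MeasurableSpace Ω] [MeasurableSpace S]
    (P : Measure Ω) (X : ℤ → Ω → S) (n : ℕ) : ℝ :=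
  ⨆ k : ℕ, betaMix P
    (⨆ s : ℤ, ⨆ _ : s ≤ (k : ℤ), MeasurableSpace.comap (X s) inferInstance)
    (⨆ s : ℤ, ⨆ _ : (k : ℤ) + (n : ℤ) ≤ s, MeasurableSpace.comap (X s) inferInstance)

/-- Stationarity of a process indexed by ℤ. -/
def Stationary {Ω S : Type*} [MeasurableSpace Ω] [MeasurableSpace S]
    (P : Measure Ω) (X : ℤ → Ω → S) : Prop :=
  Measure.map (fun ω => fun i : ℤ => X (i + 1) ω) P
    = Measure.map (fun ω => fun i : ℤ => X i ω) P


section RectAlgebra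

variable {S T : Type*} [MeasurableSpace S] [MeasurableSpace T]

/-- Finite unions of measurable rectangles. -/
def rectUnions (S T : Type*) [MeasurableSpace S] [MeasurableSpace T] : Set (Set (S × T)) :=
  {t | ∃ l : List (Set S × Set T), (∀ r ∈ l, MeasurableSet r.1 ∧ MeasurableSet r.2) ∧
    t = ⋃ r ∈ l, r.1 ×ˢ r.2}

lemma rectUnions_inter {s t : Set (S × T)} (hs : s ∈ rectUnions S T) (ht : t ∈ rectUnions S T) :
    s ∩ t ∈ rectUnions S T := by
  obtain ⟨l₁, hl₁, rfl⟩ := hs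
  obtain ⟨l₂, hl₂, rfl⟩ := ht
  refine ⟨l₁.flatMap (fun r₁ => l₂.map (fun r₂ => (r₁.1 ∩ r₂.1, r₁.2 ∩ r₂.2))), ?_, ?_⟩
  · intro r hr
    simp only [List.mem_flatMap, List.mem_map] at hr
    obtain ⟨r₁, h₁, r₂, h₂, rfl⟩ := hr
    exact ⟨(hl₁ r₁ h₁).1.inter (hl₂ r₂ h₂).1, (hl₁ r₁ h₁).2.inter (hl₂ r₂ h₂).2⟩
  · ext ⟨x, y⟩
    simp only [Set.mem_inter_iff, Set.mem_iUnion, List.mem_flatMap, List.mem_map, Set.mem_prod]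
    constructor
    · rintro ⟨⟨r₁, h₁, hx₁, hy₁⟩, ⟨r₂, h₂, hx₂, hy₂⟩⟩
      exact ⟨(r₁.1 ∩ r₂.1, r₁.2 ∩ r₂.2), ⟨r₁, h₁, r₂, h₂, rfl⟩, ⟨hx₁, hx₂⟩, ⟨hy₁, hy₂⟩⟩
    · rintro ⟨r, ⟨r₁, h₁, r₂, h₂, rfl⟩, ⟨hx₁, hx₂⟩, ⟨hy₁, hy₂⟩⟩
      exact ⟨⟨r₁, h₁, hx₁, hy₁⟩, ⟨r₂, h₂, hx₂, hy₂⟩⟩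

lemma isSetAlgebra_rectUnions : IsSetAlgebra (rectUnions S T) where
  empty_mem := ⟨[], by simp, by simp⟩
  compl_mem := by
    rintro s ⟨l, hl, rfl⟩
    induction l with
    | nil => exact ⟨[(Set.univ, Set.univ)], by simp, by simp⟩
    | cons a l ih =>
      have h0 : (⋃ r ∈ (a :: l), r.1 ×ˢ r.2)
          = a.1 ×ˢ a.2 ∪ ⋃ r ∈ l, r.1 ×ˢ r.2 := by
        simp only [List.mem_cons, Set.iUnion_or, Set.iUnion_union_distrib,
          Set.iUnion_iUnion_eq_left]
      rw [h0, Set.compl_union]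
      have ha := hl a (by simp)
      have hc : (a.1 ×ˢ a.2)ᶜ ∈ rectUnions S T := by
        refine ⟨[(a.1ᶜ, Set.univ), (a.1, a.2ᶜ)], ?_, ?_⟩
        · intro r hr
          simp only [List.mem_cons, List.mem_singleton] at hr
          rcases hr with rfl | rfl | h
          · exact ⟨ha.1.compl, MeasurableSet.univ⟩
          · exact ⟨ha.1, ha.2.compl⟩
          · simp at h
        · ext ⟨x, y⟩
          by_cases hx : x ∈ a.1 <;> simp [Set.mem_prod, hx]
      exact rectUnions_inter hc (ih (fun r hr => hl r (List.mem_cons_of_mem _ hr)))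
  union_mem := by
    rintro s t ⟨l₁, hl₁, rfl⟩ ⟨l₂, hl₂, rfl⟩
    refine ⟨l₁ ++ l₂, ?_, ?_⟩
    · intro r hr
      rcases List.mem_append.1 hr with h | h
      exacts [hl₁ r h, hl₂ r h]
    · simp only [List.mem_append, Set.iUnion_or, Set.iUnion_union_distrib]

lemma generateFrom_rectUnions :
    MeasurableSpace.generateFrom (rectUnions S T) = Prod.instMeasurableSpace := by
  refine le_antisymm ?_ ?_
  · rw [MeasurableSpace.generateFrom_le_iff]
    rintro s ⟨l, hl, rfl⟩
    show MeasurableSet (⋃ r ∈ l, r.1 ×ˢ r.2)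
    refine MeasurableSet.biUnion l.finite_toSet.countable ?_
    intro r hr
    exact ((hl r hr).1.prod (hl r hr).2)
  · rw [← generateFrom_prod]
    refine MeasurableSpace.generateFrom_le ?_
    rintro s ⟨A, hA, B, hB, rfl⟩
    exact MeasurableSpace.measurableSet_generateFrom
      ⟨[(A, B)], by simpa using ⟨hA, hB⟩, by simp⟩

end RectAlgebra

section Atoms

variable {α : Type*} {K : ℕ}

/-- The atom of the family `A` with signature `σ`. -/
def atomOf (A : Fin K → Set α) (σ : Fin K → Bool) : Set α :=
  {x | ∀ k, x ∈ A k ↔ σ k = true}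

lemma measurableSet_atomOf [MeasurableSpace α] {A : Fin K → Set α}
    (hA : ∀ k, MeasurableSet (A k)) (σ : Fin K → Bool) :
    MeasurableSet (atomOf A σ) := by
  have : atomOf A σ = ⋂ k, (if σ k = true then A k else (A k)ᶜ) := by
    ext x
    simp only [atomOf, Set.mem_setOf_eq, Set.mem_iInter]
    refine forall_congr' fun k => ?_
    by_cases hσ : σ k = true <;> simp [hσ]
  rw [this]
  exact MeasurableSet.iInter fun k => by
    by_cases hσ : σ k = true <;> simp [hσ, hA k, (hA k).compl]

lemma pairwise_disjoint_atomOf {A : Fin K → Set α} :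
    Pairwise (Function.onFun Disjoint (atomOf A)) := by
  intro σ τ hne
  rw [Function.onFun, Set.disjoint_left]
  intro x hxσ hxτ
  apply hne
  funext k
  have h1 := hxσ k
  have h2 := hxτ k
  cases hσ : σ k <;> cases hτ : τ k <;> simp_all

lemma iUnion_atomOf (A : Fin K → Set α) : (⋃ σ, atomOf A σ) = Set.univ := by
  classical
  refine Set.eq_univ_of_forall fun x => Set.mem_iUnion.2 ?_
  exact ⟨fun k => decide (x ∈ A k), fun k => (decide_eq_true_iff).symm⟩

lemma atomOf_subset {A : Fin K → Set α} {σ : Fin K → Bool} {k : Fin K} (hσ : σ k = true) :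
    atomOf A σ ⊆ A k := fun x hx => (hx k).2 hσ

end Atoms

section PartitionSum

lemma sum_toReal_meas_inter {α : Type*} [MeasurableSpace α] (κ : Measure α) [IsFiniteMeasure κ]
    {ι : Type*} [Fintype ι] {V : ι → Set α} (hV : ∀ j, MeasurableSet (V j))
    (hVd : Pairwise (Function.onFun Disjoint V)) (hVc : (⋃ j, V j) = Set.univ)
    {W : Set α} (hW : MeasurableSet W) :
    ∑ j, (κ (W ∩ V j)).toReal = (κ W).toReal := by
  have h2 : κ W = ∑' j, κ (W ∩ V j) := by
    conv_lhs => rw [show W = ⋃ j, W ∩ V j by rw [← Set.inter_iUnion, hVc, Set.inter_univ]]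
    exact measure_iUnion
      (fun i j hij => (hVd hij).mono Set.inter_subset_right Set.inter_subset_right)
      (fun j => hW.inter (hV j))
  rw [h2, tsum_fintype, ENNReal.toReal_sum (fun a _ => measure_ne_top κ _)]

end PartitionSum

section BetaLower

variable {Ω S T : Type*} [mΩ : MeasurableSpace Ω] [MeasurableSpace S] [MeasurableSpace T]

lemma betaSet_bddAbove (P : Measure Ω) [IsProbabilityMeasure P]
    {F G : MeasurableSpace Ω} (hF : F ≤ mΩ) (hG : G ≤ mΩ) :
    BddAbove { r : ℝ | ∃ (n m : ℕ) (U : Fin n → Set Ω) (V : Fin m → Set Ω),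
      (∀ i, MeasurableSet[F] (U i)) ∧ (∀ j, MeasurableSet[G] (V j)) ∧
      Pairwise (Function.onFun Disjoint U) ∧ Pairwise (Function.onFun Disjoint V) ∧
      (⋃ i, U i) = Set.univ ∧ (⋃ j, V j) = Set.univ ∧
      r = ∑ i, ∑ j, |(P (U i ∩ V j)).toReal - (P (U i)).toReal * (P (V j)).toReal| } := by
  refine ⟨2, ?_⟩
  rintro r ⟨n, m, U, V, hU, hV, hUd, hVd, hUc, hVc, rfl⟩
  have hU' : ∀ i, MeasurableSet[mΩ] (U i) := fun i => hF _ (hU i)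
  have hV' : ∀ j, MeasurableSet[mΩ] (V j) := fun j => hG _ (hV j)
  have habs : ∀ i j, |(P (U i ∩ V j)).toReal - (P (U i)).toReal * (P (V j)).toReal|
      ≤ (P (U i ∩ V j)).toReal + (P (U i)).toReal * (P (V j)).toReal := by
    intro i j
    refine (abs_sub _ _).trans ?_
    rw [abs_of_nonneg ENNReal.toReal_nonneg,
      abs_of_nonneg (mul_nonneg ENNReal.toReal_nonneg ENNReal.toReal_nonneg)]
  calc ∑ i, ∑ j, |(P (U i ∩ V j)).toReal - (P (U i)).toReal * (P (V j)).toReal|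
      ≤ ∑ i, ∑ j, ((P (U i ∩ V j)).toReal + (P (U i)).toReal * (P (V j)).toReal) := by
        exact Finset.sum_le_sum fun i _ => Finset.sum_le_sum fun j _ => habs i j
    _ = (∑ i, ∑ j, (P (U i ∩ V j)).toReal)
        + (∑ i, (P (U i)).toReal) * (∑ j, (P (V j)).toReal) := by
        rw [Finset.sum_mul]
        rw [← Finset.sum_add_distrib]
        refine Finset.sum_congr rfl fun i _ => ?_
        rw [Finset.sum_add_distrib, Finset.mul_sum]
    _ ≤ 2 := by
        have h1 : ∀ i, ∑ j, (P (U i ∩ V j)).toReal = (P (U i)).toReal := fun i =>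
          @sum_toReal_meas_inter Ω mΩ P _ _ _ _ hV' hVd hVc _ (hU' i)
        have h2 : ∑ i, (P (U i)).toReal = 1 := by
          have := @sum_toReal_meas_inter Ω mΩ P _ _ _ _ hU' hUd hUc _ (@MeasurableSet.univ Ω mΩ)
          simpa [measure_univ] using this
        have h3 : ∑ j, (P (V j)).toReal = 1 := by
          have := @sum_toReal_meas_inter Ω mΩ P _ _ _ _ hV' hVd hVc _ (@MeasurableSet.univ Ω mΩ)
          simpa [measure_univ] using this
        simp only [h1, h2, h3]
        norm_num

end BetaLower

section Main
variable {Ω S T : Type*} [mΩ : MeasurableSpace Ω] [MeasurableSpace S] [MeasurableSpace T]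

lemma disjoint_prod_of {s s' : Set S} {t t' : Set T}
    (h : Disjoint s s' ∨ Disjoint t t') : Disjoint (s ×ˢ t) (s' ×ˢ t') := by
  rw [Set.disjoint_left]
  rintro ⟨x, y⟩ ⟨hx, hy⟩ ⟨hx', hy'⟩
  rcases h with h | h
  · exact Set.disjoint_left.1 h hx hx'
  · exact Set.disjoint_left.1 h hy hy'

lemma le_betaRV_of_finUnion (P : Measure Ω) [IsProbabilityMeasure P]
    {X : Ω → S} {Y : Ω → T} (hX : Measurable X) (hY : Measurable Y)
    {K : ℕ} {A : Fin K → Set S} {B : Fin K → Set T}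
    (hA : ∀ k, MeasurableSet (A k)) (hB : ∀ k, MeasurableSet (B k)) :
    ((P.map (fun ω => (X ω, Y ω))) (⋃ k, A k ×ˢ B k)).toReal
      - (((P.map X).prod (P.map Y)) (⋃ k, A k ×ˢ B k)).toReal ≤ betaRV P X Y := by
  classical
  set R : Set (S × T) := ⋃ k, A k ×ˢ B k with hRdef
  have hRmeas : MeasurableSet R := MeasurableSet.iUnion fun k => (hA k).prod (hB k)
  set μ : Measure (S × T) := P.map (fun ω => (X ω, Y ω)) with hμ
  set ν : Measure (S × T) := (P.map X).prod (P.map Y) with hν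
  haveI : IsProbabilityMeasure μ := Measure.isProbabilityMeasure_map (hX.prodMk hY).aemeasurable
  haveI : IsProbabilityMeasure (P.map X) := Measure.isProbabilityMeasure_map hX.aemeasurable
  haveI : IsProbabilityMeasure (P.map Y) := Measure.isProbabilityMeasure_map hY.aemeasurable
  haveI : IsProbabilityMeasure ν := by rw [hν]; infer_instance
  set δ : Set (S × T) → ℝ := fun W => (μ W).toReal - (ν W).toReal with hδ
  -- the dichotomy
  have key : ∀ σ τ : Fin K → Bool, R ∩ (atomOf A σ ×ˢ atomOf B τ) = atomOf A σ ×ˢ atomOf B τ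
      ∨ R ∩ (atomOf A σ ×ˢ atomOf B τ) = ∅ := by
    intro σ τ
    by_cases hex : ∃ k, σ k = true ∧ τ k = true
    · left
      obtain ⟨k, hσk, hτk⟩ := hex
      refine Set.inter_eq_right.2 ?_
      rintro ⟨x, y⟩ ⟨hx, hy⟩
      exact Set.mem_iUnion.2 ⟨k, atomOf_subset hσk hx, atomOf_subset hτk hy⟩
    · right
      rw [Set.eq_empty_iff_forall_notMem]
      rintro ⟨x, y⟩ ⟨hzR, hx, hy⟩
      obtain ⟨k, hxk, hyk⟩ := Set.mem_iUnion.1 hzR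
      exact hex ⟨k, (hx k).1 hxk, (hy k).1 hyk⟩
  have hrectmeas : ∀ st : (Fin K → Bool) × (Fin K → Bool),
      MeasurableSet (atomOf A st.1 ×ˢ atomOf B st.2) := fun st =>
    (measurableSet_atomOf hA st.1).prod (measurableSet_atomOf hB st.2)
  have hrectdisj : Pairwise (Function.onFun Disjoint
      (fun st : (Fin K → Bool) × (Fin K → Bool) => atomOf A st.1 ×ˢ atomOf B st.2)) := by
    intro st st' hne
    have : st.1 ≠ st'.1 ∨ st.2 ≠ st'.2 := by
      by_contra hcon
      push_neg at hcon
      exact hne (Prod.ext hcon.1 hcon.2)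
    exact disjoint_prod_of (this.imp (fun h => pairwise_disjoint_atomOf h)
      (fun h => pairwise_disjoint_atomOf h))
  have hrectcov : (⋃ st : (Fin K → Bool) × (Fin K → Bool),
      atomOf A st.1 ×ˢ atomOf B st.2) = Set.univ := by
    rw [Set.iUnion_prod, iUnion_atomOf, iUnion_atomOf, Set.univ_prod_univ]
  -- partition sums
  have hsum : ∀ (κ : Measure (S × T)) [IsFiniteMeasure κ], ∀ {W : Set (S × T)},
      MeasurableSet W →
      ∑ σ : Fin K → Bool, ∑ τ : Fin K → Bool, (κ (W ∩ atomOf A σ ×ˢ atomOf B τ)).toReal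
        = (κ W).toReal := by
    intro κ _ W hW
    rw [← Fintype.sum_prod_type']
    exact sum_toReal_meas_inter κ hrectmeas hrectdisj hrectcov hW
  -- term bound
  have hterm : ∀ σ τ : Fin K → Bool,
      δ (R ∩ atomOf A σ ×ˢ atomOf B τ) - δ (Rᶜ ∩ atomOf A σ ×ˢ atomOf B τ)
        ≤ |δ (atomOf A σ ×ˢ atomOf B τ)| := by
    intro σ τ
    rcases key σ τ with h | h
    · have hsub : atomOf A σ ×ˢ atomOf B τ ⊆ R := Set.inter_eq_right.1 h
      have h2 : Rᶜ ∩ atomOf A σ ×ˢ atomOf B τ = ∅ := by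
        rw [Set.eq_empty_iff_forall_notMem]
        rintro z ⟨hz1, hz2⟩
        exact hz1 (hsub hz2)
      rw [h, h2]
      simp only [hδ, measure_empty, ENNReal.toReal_zero, sub_zero, sub_self]
      exact le_abs_self _
    · have h2 : Rᶜ ∩ atomOf A σ ×ˢ atomOf B τ = atomOf A σ ×ˢ atomOf B τ := by
        refine Set.inter_eq_right.2 fun z hz hzR => ?_
        rw [Set.eq_empty_iff_forall_notMem] at h
        exact h z ⟨hzR, hz⟩
      rw [h, h2]
      simp only [hδ, measure_empty, ENNReal.toReal_zero, sub_self, zero_sub]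
      exact neg_le_abs _
  -- the chain
  have hchain : 2 * δ R ≤ ∑ σ : Fin K → Bool, ∑ τ : Fin K → Bool,
      |δ (atomOf A σ ×ˢ atomOf B τ)| := by
    have e1 : ∀ W, MeasurableSet W → ∑ σ : Fin K → Bool, ∑ τ : Fin K → Bool,
        δ (W ∩ atomOf A σ ×ˢ atomOf B τ) = δ W := by
      intro W hW
      simp only [hδ]
      rw [← hsum μ hW, ← hsum ν hW, ← Finset.sum_sub_distrib]
      exact Finset.sum_congr rfl fun σ _ => by rw [← Finset.sum_sub_distrib]
    have e2 : δ Rᶜ = -δ R := by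
      simp only [hδ]
      have hμc : (μ Rᶜ).toReal = 1 - (μ R).toReal := by
        rw [prob_compl_eq_one_sub hRmeas,
          ENNReal.toReal_sub_of_le prob_le_one ENNReal.one_ne_top]
        simp
      have hνc : (ν Rᶜ).toReal = 1 - (ν R).toReal := by
        rw [prob_compl_eq_one_sub hRmeas,
          ENNReal.toReal_sub_of_le prob_le_one ENNReal.one_ne_top]
        simp
      rw [hμc, hνc]; ring
    have hδR : ∑ σ : Fin K → Bool, ∑ τ : Fin K → Bool,
        (δ (R ∩ atomOf A σ ×ˢ atomOf B τ) - δ (Rᶜ ∩ atomOf A σ ×ˢ atomOf B τ)) = 2 * δ R :=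
      calc ∑ σ : Fin K → Bool, ∑ τ : Fin K → Bool,
            (δ (R ∩ atomOf A σ ×ˢ atomOf B τ) - δ (Rᶜ ∩ atomOf A σ ×ˢ atomOf B τ))
          = (∑ σ : Fin K → Bool, ∑ τ : Fin K → Bool, δ (R ∩ atomOf A σ ×ˢ atomOf B τ))
            - ∑ σ : Fin K → Bool, ∑ τ : Fin K → Bool, δ (Rᶜ ∩ atomOf A σ ×ˢ atomOf B τ) := by
            rw [← Finset.sum_sub_distrib]
            exact Finset.sum_congr rfl fun σ _ => by rw [← Finset.sum_sub_distrib]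
        _ = δ R - δ Rᶜ := by rw [e1 R hRmeas, e1 Rᶜ hRmeas.compl]
        _ = 2 * δ R := by rw [e2]; ring
    rw [← hδR]
    exact Finset.sum_le_sum fun σ _ => Finset.sum_le_sum fun τ _ => hterm σ τ
  -- membership in the beta set
  set n : ℕ := Fintype.card (Fin K → Bool) with hn
  set e : (Fin K → Bool) ≃ Fin n := Fintype.equivFin _ with he
  have hmem : (∑ σ : Fin K → Bool, ∑ τ : Fin K → Bool, |δ (atomOf A σ ×ˢ atomOf B τ)|)
      ∈ { r : ℝ | ∃ (n' m : ℕ) (U : Fin n' → Set Ω) (V : Fin m → Set Ω),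
      (∀ i, MeasurableSet[MeasurableSpace.comap X inferInstance] (U i)) ∧
      (∀ j, MeasurableSet[MeasurableSpace.comap Y inferInstance] (V j)) ∧
      Pairwise (Function.onFun Disjoint U) ∧ Pairwise (Function.onFun Disjoint V) ∧
      (⋃ i, U i) = Set.univ ∧ (⋃ j, V j) = Set.univ ∧
      r = ∑ i, ∑ j, |(P (U i ∩ V j)).toReal - (P (U i)).toReal * (P (V j)).toReal| } := by
    refine ⟨n, n, fun i => X ⁻¹' (atomOf A (e.symm i)), fun j => Y ⁻¹' (atomOf B (e.symm j)),
      fun i => ⟨atomOf A (e.symm i), measurableSet_atomOf hA _, rfl⟩,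
      fun j => ⟨atomOf B (e.symm j), measurableSet_atomOf hB _, rfl⟩,
      fun i j hne => (pairwise_disjoint_atomOf (e.symm.injective.ne hne)).preimage X,
      fun i j hne => (pairwise_disjoint_atomOf (e.symm.injective.ne hne)).preimage Y,
      ?_, ?_, ?_⟩
    · rw [← Set.preimage_iUnion, e.symm.surjective.iUnion_comp (fun σ => atomOf A σ),
        iUnion_atomOf, Set.preimage_univ]
    · rw [← Set.preimage_iUnion, e.symm.surjective.iUnion_comp (fun τ => atomOf B τ),
        iUnion_atomOf, Set.preimage_univ]
    · rw [← e.symm.sum_comp (fun σ => ∑ τ : Fin K → Bool, |δ (atomOf A σ ×ˢ atomOf B τ)|)]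
      refine Finset.sum_congr rfl fun i _ => ?_
      rw [← e.symm.sum_comp (fun τ => |δ (atomOf A (e.symm i) ×ˢ atomOf B τ)|)]
      refine Finset.sum_congr rfl fun j _ => ?_
      congr 1
      show (μ (atomOf A (e.symm i) ×ˢ atomOf B (e.symm j))).toReal
        - (ν (atomOf A (e.symm i) ×ˢ atomOf B (e.symm j))).toReal = _
      have hpre : X ⁻¹' (atomOf A (e.symm i)) ∩ Y ⁻¹' (atomOf B (e.symm j))
          = (fun ω => (X ω, Y ω)) ⁻¹' (atomOf A (e.symm i) ×ˢ atomOf B (e.symm j)) := by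
        ext ω; simp [Set.mem_prod]
      have h1 : P (X ⁻¹' (atomOf A (e.symm i)) ∩ Y ⁻¹' (atomOf B (e.symm j)))
          = μ (atomOf A (e.symm i) ×ˢ atomOf B (e.symm j)) := by
        rw [hpre, hμ, Measure.map_apply (hX.prodMk hY) (hrectmeas (e.symm i, e.symm j))]
      have h2 : P (X ⁻¹' (atomOf A (e.symm i))) = P.map X (atomOf A (e.symm i)) :=
        (Measure.map_apply hX (measurableSet_atomOf hA _)).symm
      have h3 : P (Y ⁻¹' (atomOf B (e.symm j))) = P.map Y (atomOf B (e.symm j)) :=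
        (Measure.map_apply hY (measurableSet_atomOf hB _)).symm
      have h4 : ν (atomOf A (e.symm i) ×ˢ atomOf B (e.symm j))
          = P.map X (atomOf A (e.symm i)) * P.map Y (atomOf B (e.symm j)) := by
        rw [hν, Measure.prod_prod]
      rw [h1, h2, h3, h4, ENNReal.toReal_mul]
  -- conclude
  have hbdd := betaSet_bddAbove P hX.comap_le hY.comap_le
  have hle := le_csSup hbdd hmem
  have hfin : 2 * δ R ≤ sSup _ := hchain.trans hle
  have hδR' : δ R = (μ R).toReal - (ν R).toReal := rfl
  rw [hδR'] at hfin
  rw [betaRV, betaMix]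
  linarith [hfin]

lemma le_betaRV_of_rectUnions (P : Measure Ω) [IsProbabilityMeasure P]
    {X : Ω → S} {Y : Ω → T} (hX : Measurable X) (hY : Measurable Y)
    {R : Set (S × T)} (hR : R ∈ rectUnions S T) :
    ((P.map (fun ω => (X ω, Y ω))) R).toReal - (((P.map X).prod (P.map Y)) R).toReal
      ≤ betaRV P X Y := by
  obtain ⟨l, hl, rfl⟩ := hR
  have hRK : (⋃ r ∈ l, r.1 ×ˢ r.2)
      = ⋃ k : Fin l.length, (l.get k).1 ×ˢ (l.get k).2 := by
    ext z
    simp only [Set.mem_iUnion, exists_prop]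
    constructor
    · rintro ⟨r, hr, hz⟩
      obtain ⟨k, hk⟩ := List.mem_iff_get.1 hr
      exact ⟨k, by rw [hk]; exact hz⟩
    · rintro ⟨k, hz⟩
      exact ⟨l.get k, List.get_mem l k, hz⟩
  rw [hRK]
  exact le_betaRV_of_finUnion P hX hY (fun k => (hl _ (List.get_mem l k)).1)
    (fun k => (hl _ (List.get_mem l k)).2)
end Main

section Approx
variable {Ω S T : Type*} [mΩ : MeasurableSpace Ω] [MeasurableSpace S] [MeasurableSpace T]

lemma le_betaRV (P : Measure Ω) [IsProbabilityMeasure P]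
    {X : Ω → S} {Y : Ω → T} (hX : Measurable X) (hY : Measurable Y)
    {E : Set (S × T)} (hE : MeasurableSet E) :
    ((P.map (fun ω => (X ω, Y ω))) E).toReal - (((P.map X).prod (P.map Y)) E).toReal
      ≤ betaRV P X Y := by
  set μ : Measure (S × T) := P.map (fun ω => (X ω, Y ω)) with hμdef
  set ν : Measure (S × T) := (P.map X).prod (P.map Y) with hνdef
  haveI : IsProbabilityMeasure μ := Measure.isProbabilityMeasure_map (hX.prodMk hY).aemeasurable
  haveI : IsProbabilityMeasure (P.map X) := Measure.isProbabilityMeasure_map hX.aemeasurable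
  haveI : IsProbabilityMeasure (P.map Y) := Measure.isProbabilityMeasure_map hY.aemeasurable
  haveI : IsProbabilityMeasure ν := by rw [hνdef]; infer_instance
  refine le_of_forall_pos_le_add fun ε hε => ?_
  set κ : Measure (S × T) := μ + ν with hκdef
  haveI : IsFiniteMeasure κ := by rw [hκdef]; infer_instance
  have hdense := Measure.MeasureDense.of_generateFrom_isSetAlgebra_finite (μ := κ)
    isSetAlgebra_rectUnions generateFrom_rectUnions.symm
  obtain ⟨R, hR, hRapprox⟩ := hdense.approx E hE (measure_ne_top κ E) ε hε
  have hsub1 : E ⊆ R ∪ (E ∆ R) := by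
    intro z hz
    by_cases hzR : z ∈ R
    · exact Or.inl hzR
    · exact Or.inr (Set.symmDiff_def E R ▸ Or.inl ⟨hz, hzR⟩)
  have hsub2 : R ⊆ E ∪ (E ∆ R) := by
    intro z hz
    by_cases hzE : z ∈ E
    · exact Or.inl hzE
    · exact Or.inr (Set.symmDiff_def E R ▸ Or.inr ⟨hz, hzE⟩)
  have hbound : ∀ (ρ : Measure (S × T)) [IsProbabilityMeasure ρ], ∀ {W W' : Set (S × T)},
      W ⊆ W' ∪ (E ∆ R) → (ρ W).toReal ≤ (ρ W').toReal + (ρ (E ∆ R)).toReal := by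
    intro ρ _ W W' hsub
    have h1 : ρ W ≤ ρ W' + ρ (E ∆ R) := (measure_mono hsub).trans (measure_union_le _ _)
    have h2 := ENNReal.toReal_mono
      (by finiteness : ρ W' + ρ (E ∆ R) ≠ ∞) h1
    rwa [ENNReal.toReal_add (measure_ne_top _ _) (measure_ne_top _ _)] at h2
  have hεbound : (μ (E ∆ R)).toReal + (ν (E ∆ R)).toReal ≤ ε := by
    have h1 : κ (E ∆ R) ≤ ENNReal.ofReal ε := le_of_lt hRapprox
    have h2 : (κ (E ∆ R)).toReal ≤ ε := by
      have := ENNReal.toReal_mono ENNReal.ofReal_ne_top h1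
      rwa [ENNReal.toReal_ofReal hε.le] at this
    have h3 : κ (E ∆ R) = μ (E ∆ R) + ν (E ∆ R) := rfl
    rw [h3, ENNReal.toReal_add (measure_ne_top _ _) (measure_ne_top _ _)] at h2
    exact h2
  have hmain := le_betaRV_of_rectUnions P hX hY hR
  have b1 := hbound μ hsub1
  have b2 := hbound ν hsub2
  rw [← hμdef, ← hνdef] at hmain
  linarith
end Approx

section Analysis
variable {Ω S T : Type*} [mΩ : MeasurableSpace Ω] [MeasurableSpace S] [MeasurableSpace T]

lemma ennreal_sub_le_ofReal {a b : ℝ≥0∞} {c : ℝ} (ha : a ≠ ∞) (hb : b ≠ ∞)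
    (h : a.toReal - b.toReal ≤ c) : a - b ≤ ENNReal.ofReal c := by
  rcases le_total a b with hab | hab
  · simp [tsub_eq_zero_of_le hab]
  · have : a - b = ENNReal.ofReal (a.toReal - b.toReal) := by
      rw [ENNReal.ofReal_sub _ ENNReal.toReal_nonneg, ENNReal.ofReal_toReal ha,
        ENNReal.ofReal_toReal hb]
    rw [this]
    exact ENNReal.ofReal_le_ofReal h

lemma lintegral_D_le_two_beta (P : Measure Ω) [IsProbabilityMeasure P]
    {X : Ω → S} {Y : Ω → T} (hX : Measurable X) (hY : Measurable Y)
    {g : S × T → ℝ≥0∞} (hg : Measurable g)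
    (hdens : P.map (fun ω => (X ω, Y ω)) = ((P.map X).prod (P.map Y)).withDensity g) :
    ∫⁻ z, ((g z - 1) + (1 - g z)) ∂((P.map X).prod (P.map Y))
      ≤ 2 * ENNReal.ofReal (betaRV P X Y) := by
  set μ : Measure (S × T) := P.map (fun ω => (X ω, Y ω)) with hμdef
  set ν : Measure (S × T) := (P.map X).prod (P.map Y) with hνdef
  haveI : IsProbabilityMeasure μ := Measure.isProbabilityMeasure_map (hX.prodMk hY).aemeasurable
  haveI : IsProbabilityMeasure (P.map X) := Measure.isProbabilityMeasure_map hX.aemeasurable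
  haveI : IsProbabilityMeasure (P.map Y) := Measure.isProbabilityMeasure_map hY.aemeasurable
  haveI : IsProbabilityMeasure ν := by rw [hνdef]; infer_instance
  set E : Set (S × T) := {z | 1 < g z} with hEdef
  have hE : MeasurableSet E := measurableSet_lt measurable_const hg
  have hwd : ∀ {W : Set (S × T)}, MeasurableSet W → μ W = ∫⁻ z in W, g z ∂ν := by
    intro W hW
    rw [hdens, withDensity_apply g hW]
  -- first piece
  have part1 : ∫⁻ z, (g z - 1) ∂ν = μ E - ν E := by
    have hind : (fun z => g z - 1) = E.indicator (fun z => g z - 1) := by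
      funext z
      by_cases hz : z ∈ E
      · rw [Set.indicator_of_mem hz]
      · rw [Set.indicator_of_notMem hz, tsub_eq_zero_of_le (le_of_not_gt hz)]
    rw [hind, lintegral_indicator hE _]
    rw [lintegral_sub measurable_const (by simp [setLIntegral_one])
      (((ae_restrict_mem hE).mono) fun z hz => le_of_lt hz)]
    rw [setLIntegral_one, ← hwd hE]
  -- second piece
  have part2 : ∫⁻ z, (1 - g z) ∂ν = ν Eᶜ - μ Eᶜ := by
    have hind : (fun z => 1 - g z) = Eᶜ.indicator (fun z => 1 - g z) := by
      funext z
      by_cases hz : z ∈ Eᶜ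
      · rw [Set.indicator_of_mem hz]
      · rw [Set.indicator_of_notMem hz]
        have : 1 ≤ g z := le_of_lt (not_not.1 hz)
        rw [tsub_eq_zero_of_le this]
    rw [hind, lintegral_indicator hE.compl _]
    rw [lintegral_sub hg (by rw [← hwd hE.compl]; exact measure_ne_top μ _)
      (((ae_restrict_mem hE.compl).mono) fun z hz => le_of_not_gt hz)]
    rw [setLIntegral_one, ← hwd hE.compl]
  have hdelta := le_betaRV P hX hY hE
  rw [← hμdef, ← hνdef] at hdelta
  have hdelta' : (ν Eᶜ).toReal - (μ Eᶜ).toReal ≤ betaRV P X Y := by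
    have hμc : (μ Eᶜ).toReal = 1 - (μ E).toReal := by
      rw [prob_compl_eq_one_sub hE, ENNReal.toReal_sub_of_le prob_le_one ENNReal.one_ne_top]
      simp
    have hνc : (ν Eᶜ).toReal = 1 - (ν E).toReal := by
      rw [prob_compl_eq_one_sub hE, ENNReal.toReal_sub_of_le prob_le_one ENNReal.one_ne_top]
      simp
    rw [hμc, hνc]
    linarith
  have h1 : μ E - ν E ≤ ENNReal.ofReal (betaRV P X Y) :=
    ennreal_sub_le_ofReal (measure_ne_top _ _) (measure_ne_top _ _) hdelta
  have h2 : ν Eᶜ - μ Eᶜ ≤ ENNReal.ofReal (betaRV P X Y) :=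
    ennreal_sub_le_ofReal (measure_ne_top _ _) (measure_ne_top _ _) hdelta'
  calc ∫⁻ z, ((g z - 1) + (1 - g z)) ∂ν
      = (∫⁻ z, (g z - 1) ∂ν) + ∫⁻ z, (1 - g z) ∂ν :=
        lintegral_add_left (hg.sub measurable_const) _
    _ = (μ E - ν E) + (ν Eᶜ - μ Eᶜ) := by rw [part1, part2]
    _ ≤ ENNReal.ofReal (betaRV P X Y) + ENNReal.ofReal (betaRV P X Y) := add_le_add h1 h2
    _ = 2 * ENNReal.ofReal (betaRV P X Y) := (two_mul _).symm
end Analysis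

section StepA
variable {Ω S T : Type*} [mΩ : MeasurableSpace Ω] [MeasurableSpace S] [MeasurableSpace T]

lemma step_A (P : Measure Ω) [IsProbabilityMeasure P]
    {X : Ω → S} {Y : Ω → T} (hX : Measurable X) (hY : Measurable Y)
    {g : S × T → ℝ≥0∞} (hg : Measurable g)
    (hdens : P.map (fun ω => (X ω, Y ω)) = ((P.map X).prod (P.map Y)).withDensity g)
    (hgbdd : essSup g ((P.map X).prod (P.map Y)) ≠ ∞)
    {p : ℝ≥0∞} (hp1 : 1 ≤ p) {h : S × T → ℝ} (hh : Measurable h)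
    (hhp : eLpNorm h p ((P.map X).prod (P.map Y)) ≠ ∞) :
    ENNReal.ofReal |∫ z, h z ∂(P.map (fun ω => (X ω, Y ω)))
        - ∫ z, h z ∂((P.map X).prod (P.map Y))|
      ≤ ∫⁻ z, (‖h z‖₊ : ℝ≥0∞) * ((g z - 1) + (1 - g z)) ∂((P.map X).prod (P.map Y)) := by
  set μ : Measure (S × T) := P.map (fun ω => (X ω, Y ω)) with hμdef
  set ν : Measure (S × T) := (P.map X).prod (P.map Y) with hνdef
  haveI : IsProbabilityMeasure (P.map X) := Measure.isProbabilityMeasure_map hX.aemeasurable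
  haveI : IsProbabilityMeasure (P.map Y) := Measure.isProbabilityMeasure_map hY.aemeasurable
  haveI : IsProbabilityMeasure ν := by rw [hνdef]; infer_instance
  set M : ℝ≥0∞ := essSup g ν with hMdef
  set gnn : S × T → ℝ≥0 := fun z => (g z).toNNReal with hgnndef
  have hgnn : Measurable gnn := hg.ennreal_toNNReal
  have hgM : ∀ᵐ z ∂ν, g z ≤ M := ENNReal.ae_le_essSup g
  have hgae : ∀ᵐ z ∂ν, g z ≠ ∞ :=
    hgM.mono fun z hz => (hz.trans_lt (lt_top_iff_ne_top.2 hgbdd)).ne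
  have hwd : μ = ν.withDensity (fun z => (gnn z : ℝ≥0∞)) := by
    rw [hdens]
    exact (withDensity_congr_ae (hgae.mono fun z hz => (ENNReal.coe_toNNReal hz))).symm
  have hint : ∫ z, h z ∂μ = ∫ z, gnn z • h z ∂ν := by
    rw [hwd, integral_withDensity_eq_integral_smul hgnn]
  have hInt : Integrable h ν := (MemLp.integrable hp1 ⟨hh.aestronglyMeasurable,
    lt_top_iff_ne_top.2 hhp⟩)
  have hIntg : Integrable (fun z => gnn z • h z) ν := by
    refine Integrable.mono' (hInt.abs.const_mul M.toReal)
      ((hgnn.coe_nnreal_real.mul hh).aestronglyMeasurable.congr ?_) ?_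
    · exact Filter.Eventually.of_forall fun z => by
        simp [NNReal.smul_def]
    · refine hgM.mono fun z hz => ?_
      have h1 : ((gnn z : ℝ)) ≤ M.toReal := by
        rw [hgnndef]
        calc ((g z).toNNReal : ℝ) = (g z).toReal := rfl
          _ ≤ M.toReal := ENNReal.toReal_mono hgbdd hz
      have h2 : (0 : ℝ) ≤ (gnn z : ℝ) := (gnn z).coe_nonneg
      rw [NNReal.smul_def, smul_eq_mul]
      rw [Real.norm_eq_abs, abs_mul, abs_of_nonneg h2]
      exact mul_le_mul_of_nonneg_right h1 (abs_nonneg _)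
  have hsub : ∫ z, h z ∂μ - ∫ z, h z ∂ν = ∫ z, ((gnn z : ℝ) - 1) * h z ∂ν := by
    rw [hint, ← integral_sub hIntg hInt]
    congr 1
    funext z
    rw [NNReal.smul_def, smul_eq_mul]
    ring
  rw [hsub]
  calc ENNReal.ofReal |∫ z, ((gnn z : ℝ) - 1) * h z ∂ν|
      = (‖∫ z, ((gnn z : ℝ) - 1) * h z ∂ν‖₊ : ℝ≥0∞) := by
        rw [← enorm_eq_nnnorm, Real.enorm_eq_ofReal_abs]
    _ ≤ ∫⁻ z, (‖((gnn z : ℝ) - 1) * h z‖₊ : ℝ≥0∞) ∂ν :=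
        enorm_integral_le_lintegral_enorm _
    _ ≤ ∫⁻ z, (‖h z‖₊ : ℝ≥0∞) * ((g z - 1) + (1 - g z)) ∂ν := by
        refine lintegral_mono_ae (hgae.mono fun z hz => ?_)
        have hgr : ((gnn z : ℝ)) = (g z).toReal := rfl
        have key : ENNReal.ofReal |((gnn z : ℝ)) - 1| = (g z - 1) + (1 - g z) := by
          rw [hgr]
          by_cases h1 : 1 ≤ g z
          · have h1r : (1 : ℝ) ≤ (g z).toReal := by
              have := ENNReal.toReal_mono hz h1
              simpa using this
            rw [abs_of_nonneg (by linarith), ENNReal.ofReal_sub _ zero_le_one,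
              ENNReal.ofReal_toReal hz, ENNReal.ofReal_one,
              tsub_eq_zero_of_le h1, add_zero]
          · have h1' : g z ≤ 1 := le_of_not_ge h1
            have h1r : (g z).toReal ≤ 1 := by
              have := ENNReal.toReal_mono ENNReal.one_ne_top h1'
              simpa using this
            rw [abs_of_nonpos (by linarith), neg_sub, ENNReal.ofReal_sub _ ENNReal.toReal_nonneg,
              ENNReal.ofReal_toReal hz, ENNReal.ofReal_one,
              tsub_eq_zero_of_le h1', zero_add]
        rw [← enorm_eq_nnnorm, Real.enorm_eq_ofReal_abs, abs_mul, ENNReal.ofReal_mul (abs_nonneg _), key,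
          ← Real.enorm_eq_ofReal_abs, enorm_eq_nnnorm]
        rw [mul_comm]
end StepA

section StepB

lemma step_B {α : Type*} [MeasurableSpace α] (ν : Measure α) [IsProbabilityMeasure ν]
    {p q : ℝ≥0∞} (hpq : p⁻¹ + q⁻¹ = 1) {h : α → ℝ} (hh : Measurable h)
    (hhp : eLpNorm h p ν ≠ ∞)
    {D : α → ℝ≥0∞} (hD : Measurable D) {M : ℝ≥0∞} (hM : M ≠ ∞)
    (hDle : ∀ᵐ z ∂ν, D z ≤ 1 + M) {β : ℝ≥0∞}
    (hDβ : ∫⁻ z, D z ∂ν ≤ 2 * β) :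
    ∫⁻ z, (‖h z‖₊ : ℝ≥0∞) * D z ∂ν
      ≤ (2 : ℝ≥0∞) ^ (q⁻¹).toReal * (1 + M) ^ (p⁻¹).toReal * eLpNorm h p ν
        * β ^ (q⁻¹).toReal := by
  have hp0 : p ≠ 0 := by
    rintro rfl
    simp at hpq
  have h1M : (1 : ℝ≥0∞) + M ≠ ∞ := by
    rw [ENNReal.add_ne_top]
    exact ⟨ENNReal.one_ne_top, hM⟩
  by_cases hp1 : p = 1
  · -- q = ∞
    subst hp1
    have hq : q⁻¹ = 0 := by
      have h' : 1 + q⁻¹ = 1 + 0 := by simpa using hpq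
      exact WithTop.add_left_cancel ENNReal.one_ne_top h'
    rw [hq]
    simp only [ENNReal.toReal_zero, ENNReal.rpow_zero, one_mul, mul_one]
    rw [inv_one, ENNReal.toReal_one, ENNReal.rpow_one]
    calc ∫⁻ z, (‖h z‖₊ : ℝ≥0∞) * D z ∂ν
        ≤ ∫⁻ z, (‖h z‖₊ : ℝ≥0∞) * (1 + M) ∂ν := by
          refine lintegral_mono_ae (hDle.mono fun z hz => ?_)
          exact mul_le_mul_right hz _
      _ = (1 + M) * ∫⁻ z, (‖h z‖₊ : ℝ≥0∞) ∂ν := by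
          rw [lintegral_mul_const' _ _ h1M, mul_comm]
      _ = (1 + M) * eLpNorm h 1 ν := by rw [eLpNorm_one_eq_lintegral_enorm]; rfl
  by_cases hptop : p = ∞
  · -- q = 1
    subst hptop
    have hq : q⁻¹ = 1 := by simpa using hpq
    rw [hq]
    simp only [ENNReal.toReal_one, ENNReal.rpow_one, ENNReal.inv_top, ENNReal.toReal_zero,
      ENNReal.rpow_zero, mul_one, one_mul]
    rw [mul_assoc]
    calc ∫⁻ z, (‖h z‖₊ : ℝ≥0∞) * D z ∂ν
        ≤ ∫⁻ z, eLpNormEssSup h ν * D z ∂ν := by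
          refine lintegral_mono_ae ((enorm_ae_le_eLpNormEssSup h ν).mono fun z hz => ?_)
          exact mul_le_mul_left hz _
      _ = eLpNormEssSup h ν * ∫⁻ z, D z ∂ν := by
          rw [lintegral_const_mul' _ _ (by rw [← eLpNorm_exponent_top]; exact hhp)]
      _ ≤ eLpNormEssSup h ν * (2 * β) := mul_le_mul_right hDβ _
      _ = 2 * (eLpNorm h ⊤ ν * β) := by rw [eLpNorm_exponent_top]; ring
  -- main case : 1 < p < ∞
  have hqtop : q ≠ ∞ := by
    rintro rfl
    rw [ENNReal.inv_top, add_zero] at hpq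
    exact hp1 (ENNReal.inv_eq_one.1 hpq)
  have hq0 : q ≠ 0 := by
    rintro rfl
    rw [ENNReal.inv_zero] at hpq
    simp at hpq
  set pr : ℝ := p.toReal with hprdef
  set qr : ℝ := q.toReal with hqrdef
  have hpq_real : pr⁻¹ + qr⁻¹ = 1 := by
    have h' := congrArg ENNReal.toReal hpq
    rwa [ENNReal.toReal_add (ENNReal.inv_ne_top.2 hp0) (ENNReal.inv_ne_top.2 hq0),
      ENNReal.toReal_inv, ENNReal.toReal_inv, ENNReal.toReal_one] at h'
  have hple : 1 ≤ p := ENNReal.inv_le_one.1 (by rw [← hpq]; exact le_self_add)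
  have hplt : 1 < p := lt_of_le_of_ne hple (Ne.symm hp1)
  have hprgt1 : 1 < pr := by
    have := (ENNReal.toReal_lt_toReal ENNReal.one_ne_top hptop).2 hplt
    simpa using this
  have hconj : Real.HolderConjugate pr qr := Real.holderConjugate_iff.2 ⟨hprgt1, hpq_real⟩
  have hqrgt1 : 1 < qr := hconj.symm.lt
  have hold := ENNReal.lintegral_mul_le_Lp_mul_Lq ν hconj
    (hh.enorm.aemeasurable) hD.aemeasurable
  have hLHS : (fun z => (‖h z‖₊ : ℝ≥0∞) * D z) = (fun z => (‖h z‖₊ : ℝ≥0∞)) * D := rfl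
  have heq : (∫⁻ z, (‖h z‖₊ : ℝ≥0∞) ^ pr ∂ν) ^ (1 / pr) = eLpNorm h p ν :=
    by rw [eLpNorm_eq_lintegral_rpow_enorm_toReal hp0 hptop]; rfl
  -- bound on the q-norm of D
  have hDq : ∫⁻ z, D z ^ qr ∂ν ≤ (1 + M) ^ (qr - 1) * (2 * β) := by
    have hexp : (1 + M) ^ (qr - 1) ≠ ∞ :=
      ENNReal.rpow_ne_top_of_nonneg (by linarith) h1M
    calc ∫⁻ z, D z ^ qr ∂ν
        ≤ ∫⁻ z, (1 + M) ^ (qr - 1) * D z ∂ν := by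
          refine lintegral_mono_ae (hDle.mono fun z hz => ?_)
          by_cases hz0 : D z = 0
          · simp [hz0, ENNReal.zero_rpow_of_pos (by linarith : (0:ℝ) < qr)]
          · have hzfin : D z ≠ ∞ := (hz.trans_lt h1M.lt_top).ne
            have hsplit : D z ^ qr = D z ^ (qr - 1) * D z := by
              rw [show qr = qr - 1 + 1 by ring, ENNReal.rpow_add _ _ hz0 hzfin,
                ENNReal.rpow_one]
              ring_nf
            rw [hsplit]
            exact mul_le_mul_left (ENNReal.rpow_le_rpow hz (by linarith)) _
      _ = (1 + M) ^ (qr - 1) * ∫⁻ z, D z ∂ν := lintegral_const_mul' _ _ hexp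
      _ ≤ (1 + M) ^ (qr - 1) * (2 * β) := mul_le_mul_right hDβ _
  have hDq' : (∫⁻ z, D z ^ qr ∂ν) ^ (1 / qr)
      ≤ (1 + M) ^ (1 / pr) * ((2:ℝ≥0∞) ^ (1 / qr) * β ^ (1 / qr)) := by
    calc (∫⁻ z, D z ^ qr ∂ν) ^ (1 / qr)
        ≤ ((1 + M) ^ (qr - 1) * (2 * β)) ^ (1 / qr) :=
          ENNReal.rpow_le_rpow hDq (by positivity)
      _ = (1 + M) ^ ((qr - 1) * (1 / qr)) * ((2:ℝ≥0∞) ^ (1 / qr) * β ^ (1 / qr)) := by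
          rw [ENNReal.mul_rpow_of_nonneg _ _ (by positivity),
            ENNReal.mul_rpow_of_nonneg _ _ (by positivity), ← ENNReal.rpow_mul]
      _ = (1 + M) ^ (1 / pr) * ((2:ℝ≥0∞) ^ (1 / qr) * β ^ (1 / qr)) := by
          congr 1
          have hqr0 : qr ≠ 0 := by linarith
          have : (qr - 1) * (1 / qr) = 1 - 1/qr := by field_simp
          rw [this]
          congr 1
          have := hpq_real
          rw [inv_eq_one_div, inv_eq_one_div] at this
          linarith
  have htotal : ∫⁻ z, (‖h z‖₊ : ℝ≥0∞) * D z ∂ν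
      ≤ eLpNorm h p ν * ((1 + M) ^ (1 / pr) * ((2:ℝ≥0∞) ^ (1 / qr) * β ^ (1 / qr))) := by
    refine le_trans ?_ (mul_le_mul' (le_of_eq heq) hDq')
    exact hold
  refine htotal.trans (le_of_eq ?_)
  rw [ENNReal.toReal_inv, ENNReal.toReal_inv, ← hprdef, ← hqrdef, ← one_div, ← one_div]
  ring
end StepB


/-- Proposition 3.1, first part: a Davydov-type inequality for the
β-mixing coefficient of two random variables whose joint law is absolutely continuous
with respect to the product of the marginals, with essentially bounded density. -/
theorem beta_mixing_integrability
    {Ω S T : Type*} [MeasurableSpace Ω] [MeasurableSpace S] [MeasurableSpace T]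
    (P : Measure Ω) [IsProbabilityMeasure P]
    (X : Ω → S) (Y : Ω → T) (hX : Measurable X) (hY : Measurable Y)
    (g : S × T → ℝ≥0∞) (hg : Measurable g)
    (hdens : Measure.map (fun ω => (X ω, Y ω)) P
      = ((P.map X).prod (P.map Y)).withDensity g)
    (hgbdd : essSup g ((P.map X).prod (P.map Y)) ≠ ∞)
    (p q : ℝ≥0∞) (hpq : p⁻¹ + q⁻¹ = 1)
    (h : S × T → ℝ) (hh : Measurable h)
    (hhp : eLpNorm h p ((P.map X).prod (P.map Y)) ≠ ∞) :
    ENNReal.ofReal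
        |∫ z, h z ∂(Measure.map (fun ω => (X ω, Y ω)) P)
          - ∫ z, h z ∂((P.map X).prod (P.map Y))|
      ≤ (2 : ℝ≥0∞) ^ (q⁻¹).toReal
          * (1 + essSup g ((P.map X).prod (P.map Y))) ^ (p⁻¹).toReal
          * eLpNorm h p ((P.map X).prod (P.map Y))
          * ENNReal.ofReal (betaRV P X Y) ^ (q⁻¹).toReal := by
  haveI : IsProbabilityMeasure (P.map X) := Measure.isProbabilityMeasure_map hX.aemeasurable
  haveI : IsProbabilityMeasure (P.map Y) := Measure.isProbabilityMeasure_map hY.aemeasurable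
  haveI : IsProbabilityMeasure ((P.map X).prod (P.map Y)) := by infer_instance
  have hp1 : 1 ≤ p := ENNReal.inv_le_one.1 (by rw [← hpq]; exact le_self_add)
  have hD : Measurable (fun z => (g z - 1) + (1 - g z)) :=
    (hg.sub measurable_const).add (measurable_const.sub hg)
  have hDle : ∀ᵐ z ∂((P.map X).prod (P.map Y)),
      (g z - 1) + (1 - g z) ≤ 1 + essSup g ((P.map X).prod (P.map Y)) := by
    refine (ENNReal.ae_le_essSup g).mono fun z hz => ?_
    calc (g z - 1) + (1 - g z) ≤ g z + 1 := add_le_add tsub_le_self tsub_le_self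
      _ ≤ essSup g ((P.map X).prod (P.map Y)) + 1 := add_le_add_left hz _
      _ = 1 + essSup g ((P.map X).prod (P.map Y)) := add_comm _ _
  calc ENNReal.ofReal
        |∫ z, h z ∂(Measure.map (fun ω => (X ω, Y ω)) P)
          - ∫ z, h z ∂((P.map X).prod (P.map Y))|
      ≤ ∫⁻ z, (‖h z‖₊ : ℝ≥0∞) * ((g z - 1) + (1 - g z)) ∂((P.map X).prod (P.map Y)) :=
        step_A P hX hY hg hdens hgbdd hp1 hh hhp
    _ ≤ (2 : ℝ≥0∞) ^ (q⁻¹).toReal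
          * (1 + essSup g ((P.map X).prod (P.map Y))) ^ (p⁻¹).toReal
          * eLpNorm h p ((P.map X).prod (P.map Y))
          * ENNReal.ofReal (betaRV P X Y) ^ (q⁻¹).toReal :=
        step_B _ hpq hh hhp hD hgbdd hDle
          (lintegral_D_le_two_beta P hX hY hg hdens)
end

section
/- Let (Ω, 𝒜, P) be a probability space, (S, 𝔖) and (T, 𝔗) measurable spaces, and (X, Y) : Ω → S × T a measurable pair. Let h : S × T → ℝ be measurable and uniformly bounded, ‖h‖_∞ = sup_{(x,y) ∈ S×T} |h(x, y)| < ∞. Then, without any absolute continuity assumption on the joint law, |∫_{S×T} h dP_{(X,Y)} − ∫_{S×T} h d(P_X ⊗ P_Y)| ≤ 2 ‖h‖_∞ β(X, Y). -/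
open MeasureTheory Real Filter Set
open scoped ENNReal NNReal

section BetaAux

open scoped symmDiff

variable {Z : Type*} [MeasurableSpace Z]

private lemma sum_measure_inter_partition (P : Measure Z) {ι : Type*} [Fintype ι] {U : ι → Set Z}
    (hU : ∀ i, MeasurableSet (U i)) (hd : Pairwise (Function.onFun Disjoint U))
    (hu : (⋃ i, U i) = Set.univ) {t : Set Z} (ht : MeasurableSet t) :
    ∑ i, P (t ∩ U i) = P t := by
  have h1 : t = ⋃ i, t ∩ U i := by rw [← Set.inter_iUnion, hu, Set.inter_univ]
  rw [← tsum_fintype (L := .unconditional _), ← measure_iUnion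
    (fun i j hij => (hd hij).mono inter_subset_right inter_subset_right)
    (fun i => ht.inter (hU i)), ← h1]

private lemma sum_toReal_measure_inter_partition (P : Measure Z) [IsFiniteMeasure P] {ι : Type*}
    [Fintype ι] {U : ι → Set Z}
    (hU : ∀ i, MeasurableSet (U i)) (hd : Pairwise (Function.onFun Disjoint U))
    (hu : (⋃ i, U i) = Set.univ) {t : Set Z} (ht : MeasurableSet t) :
    ∑ i, (P (t ∩ U i)).toReal = (P t).toReal := by
  rw [← ENNReal.toReal_sum (fun _ _ => measure_ne_top _ _),
    sum_measure_inter_partition P hU hd hu ht]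

private lemma partition_sum_le_two (P : Measure Z) [IsProbabilityMeasure P]
    {n m : ℕ} {U : Fin n → Set Z} {V : Fin m → Set Z}
    (hU : ∀ i, MeasurableSet (U i)) (hV : ∀ j, MeasurableSet (V j))
    (hdU : Pairwise (Function.onFun Disjoint U)) (hdV : Pairwise (Function.onFun Disjoint V))
    (huU : (⋃ i, U i) = Set.univ) (huV : (⋃ j, V j) = Set.univ) :
    ∑ i, ∑ j, |(P (U i ∩ V j)).toReal - (P (U i)).toReal * (P (V j)).toReal| ≤ 2 := by
  have key : ∀ i, ∑ j, (P (U i ∩ V j)).toReal = (P (U i)).toReal := fun i =>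
    sum_toReal_measure_inter_partition P hV hdV huV (hU i)
  have hPU : ∑ i, (P (U i)).toReal = 1 := by
    have h2 := sum_toReal_measure_inter_partition P hU hdU huU MeasurableSet.univ
    simp only [Set.univ_inter] at h2
    rw [h2, measure_univ, ENNReal.toReal_one]
  have hPV : ∑ j, (P (V j)).toReal = 1 := by
    have h2 := sum_toReal_measure_inter_partition P hV hdV huV MeasurableSet.univ
    simp only [Set.univ_inter] at h2
    rw [h2, measure_univ, ENNReal.toReal_one]
  calc ∑ i, ∑ j, |(P (U i ∩ V j)).toReal - (P (U i)).toReal * (P (V j)).toReal|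
      ≤ ∑ i, ∑ j, ((P (U i ∩ V j)).toReal + (P (U i)).toReal * (P (V j)).toReal) := by
        refine Finset.sum_le_sum fun i _ => Finset.sum_le_sum fun j _ => ?_
        have h1 : (0:ℝ) ≤ (P (U i ∩ V j)).toReal := ENNReal.toReal_nonneg
        have h2 : (0:ℝ) ≤ (P (U i)).toReal * (P (V j)).toReal :=
          mul_nonneg ENNReal.toReal_nonneg ENNReal.toReal_nonneg
        rw [abs_le]; constructor <;> linarith
    _ = (∑ i, ∑ j, (P (U i ∩ V j)).toReal) + ∑ i, ∑ j, (P (U i)).toReal * (P (V j)).toReal := by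
        simp [Finset.sum_add_distrib]
    _ ≤ 2 := by
        have e1 : ∑ i, ∑ j, (P (U i ∩ V j)).toReal = 1 := by
          simp only [key]; exact hPU
        have e2 : ∑ i, ∑ j, (P (U i)).toReal * (P (V j)).toReal = 1 := by
          rw [← Finset.sum_mul_sum, hPU, hPV]; norm_num
        rw [e1, e2]; norm_num

private lemma integral_diff_le (μ ν : Measure Z) [IsFiniteMeasure μ] [IsFiniteMeasure ν]
    (h : Z → ℝ) (hh : Measurable h) {M : ℝ} (hM : ∀ z, |h z| ≤ M)
    {s : Set Z} (hs : MeasurableSet s)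
    (h₁ : ∀ t, MeasurableSet t → t ⊆ s → ν t ≤ μ t)
    (h₂ : ∀ t, MeasurableSet t → t ⊆ sᶜ → μ t ≤ ν t) :
    |∫ z, h z ∂μ - ∫ z, h z ∂ν|
      ≤ M * (((μ s).toReal - (ν s).toReal) + ((ν sᶜ).toReal - (μ sᶜ).toReal)) := by
  have hbound : ∀ (ρ : Measure Z) [IsFiniteMeasure ρ], Integrable h ρ := fun ρ _ =>
    ⟨hh.aestronglyMeasurable, HasFiniteIntegral.of_bounded (C := M)
      (ae_of_all _ fun z => by simpa [Real.norm_eq_abs] using hM z)⟩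
  have hle₁ : ν.restrict s ≤ μ.restrict s := by
    refine Measure.le_iff.mpr fun t ht => ?_
    rw [Measure.restrict_apply ht, Measure.restrict_apply ht]
    exact h₁ _ (ht.inter hs) inter_subset_right
  have hle₂ : μ.restrict sᶜ ≤ ν.restrict sᶜ := by
    refine Measure.le_iff.mpr fun t ht => ?_
    rw [Measure.restrict_apply ht, Measure.restrict_apply ht]
    exact h₂ _ (ht.inter hs.compl) inter_subset_right
  set ρ₁ := μ.restrict s - ν.restrict s with hρ₁
  set ρ₂ := ν.restrict sᶜ - μ.restrict sᶜ with hρ₂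
  haveI : IsFiniteMeasure ρ₁ := isFiniteMeasure_of_le (μ.restrict s) Measure.sub_le
  haveI : IsFiniteMeasure ρ₂ := isFiniteMeasure_of_le (ν.restrict sᶜ) Measure.sub_le
  have eqμ : μ.restrict s = ρ₁ + ν.restrict s := (Measure.sub_add_cancel_of_le hle₁).symm
  have eqν : ν.restrict sᶜ = ρ₂ + μ.restrict sᶜ := (Measure.sub_add_cancel_of_le hle₂).symm
  have hIμ : ∫ z, h z ∂μ
      = ∫ z, h z ∂ρ₁ + ∫ z, h z ∂(ν.restrict s) + ∫ z, h z ∂(μ.restrict sᶜ) := by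
    rw [← integral_add_compl hs (hbound μ)]
    have h3 : ∫ z in s, h z ∂μ = ∫ z, h z ∂ρ₁ + ∫ z, h z ∂(ν.restrict s) := by
      rw [show μ.restrict s = ρ₁ + ν.restrict s from eqμ,
        integral_add_measure (hbound _) (hbound _)]
    rw [h3]
  have hIν : ∫ z, h z ∂ν
      = ∫ z, h z ∂ρ₂ + ∫ z, h z ∂(ν.restrict s) + ∫ z, h z ∂(μ.restrict sᶜ) := by
    rw [← integral_add_compl hs (hbound ν)]
    have h3 : ∫ z in sᶜ, h z ∂ν = ∫ z, h z ∂ρ₂ + ∫ z, h z ∂(μ.restrict sᶜ) := by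
      rw [show ν.restrict sᶜ = ρ₂ + μ.restrict sᶜ from eqν,
        integral_add_measure (hbound _) (hbound _)]
    rw [h3]; ring
  have hval₁ : (ρ₁ Set.univ).toReal = (μ s).toReal - (ν s).toReal := by
    rw [hρ₁, Measure.sub_apply MeasurableSet.univ hle₁, Measure.restrict_apply_univ,
      Measure.restrict_apply_univ, ENNReal.toReal_sub_of_le ?_ (measure_ne_top _ _)]
    have h3 := hle₁ Set.univ
    simpa using h3
  have hval₂ : (ρ₂ Set.univ).toReal = (ν sᶜ).toReal - (μ sᶜ).toReal := by
    rw [hρ₂, Measure.sub_apply MeasurableSet.univ hle₂, Measure.restrict_apply_univ,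
      Measure.restrict_apply_univ, ENNReal.toReal_sub_of_le ?_ (measure_ne_top _ _)]
    have h3 := hle₂ Set.univ
    simpa using h3
  have hb₁ : |∫ z, h z ∂ρ₁| ≤ M * (ρ₁ Set.univ).toReal := by
    simpa [Real.norm_eq_abs, measureReal_def] using
      norm_integral_le_of_norm_le_const (μ := ρ₁) (f := h) (C := M)
        (ae_of_all _ fun z => by simpa [Real.norm_eq_abs] using hM z)
  have hb₂ : |∫ z, h z ∂ρ₂| ≤ M * (ρ₂ Set.univ).toReal := by
    simpa [Real.norm_eq_abs, measureReal_def] using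
      norm_integral_le_of_norm_le_const (μ := ρ₂) (f := h) (C := M)
        (ae_of_all _ fun z => by simpa [Real.norm_eq_abs] using hM z)
  have hdiff : ∫ z, h z ∂μ - ∫ z, h z ∂ν = ∫ z, h z ∂ρ₁ - ∫ z, h z ∂ρ₂ := by
    rw [hIμ, hIν]; ring
  rw [hdiff]
  calc |∫ z, h z ∂ρ₁ - ∫ z, h z ∂ρ₂| ≤ |∫ z, h z ∂ρ₁| + |∫ z, h z ∂ρ₂| := abs_sub _ _
    _ ≤ M * (ρ₁ Set.univ).toReal + M * (ρ₂ Set.univ).toReal := add_le_add hb₁ hb₂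
    _ = M * (((μ s).toReal - (ν s).toReal) + ((ν sᶜ).toReal - (μ sᶜ).toReal)) := by
        rw [hval₁, hval₂]; ring

private lemma toReal_measure_le_of_subset_union (ρ : Measure Z) [IsFiniteMeasure ρ]
    {a b c : Set Z} (h : a ⊆ b ∪ c) :
    (ρ a).toReal ≤ (ρ b).toReal + (ρ c).toReal := by
  rw [← ENNReal.toReal_add (measure_ne_top _ _) (measure_ne_top _ _)]
  exact ENNReal.toReal_mono (ENNReal.add_ne_top.mpr ⟨measure_ne_top _ _, measure_ne_top _ _⟩)
    ((measure_mono h).trans (measure_union_le _ _))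

end BetaAux

section GridAux

open scoped symmDiff

variable {S T : Type*} [MeasurableSpace S] [MeasurableSpace T]

/-- Sets that are unions of cells of a finite measurable grid. -/
private def gridSets (S T : Type*) [MeasurableSpace S] [MeasurableSpace T] :
    Set (Set (S × T)) :=
  { E | ∃ (n m : ℕ) (A : Fin n → Set S) (B : Fin m → Set T),
      (∀ i, MeasurableSet (A i)) ∧ (∀ j, MeasurableSet (B j)) ∧
      Pairwise (Function.onFun Disjoint A) ∧ Pairwise (Function.onFun Disjoint B) ∧
      (⋃ i, A i) = Set.univ ∧ (⋃ j, B j) = Set.univ ∧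
      ∀ i j, (A i ×ˢ B j ⊆ E ∨ Disjoint (A i ×ˢ B j) E) }

private lemma mem_gridSets_of {ι κ : Type*} [Fintype ι] [Fintype κ] {E : Set (S × T)}
    {A : ι → Set S} {B : κ → Set T}
    (hA : ∀ i, MeasurableSet (A i)) (hB : ∀ j, MeasurableSet (B j))
    (hdA : Pairwise (Function.onFun Disjoint A)) (hdB : Pairwise (Function.onFun Disjoint B))
    (huA : (⋃ i, A i) = Set.univ) (huB : (⋃ j, B j) = Set.univ)
    (hdi : ∀ i j, (A i ×ˢ B j ⊆ E ∨ Disjoint (A i ×ˢ B j) E)) :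
    E ∈ gridSets S T := by
  classical
  let e := (Fintype.equivFin ι).symm
  let f := (Fintype.equivFin κ).symm
  refine ⟨Fintype.card ι, Fintype.card κ, A ∘ e, B ∘ f, fun i => hA _, fun j => hB _,
    fun i j hij => hdA (e.injective.ne hij), fun i j hij => hdB (f.injective.ne hij),
    ?_, ?_, fun i j => hdi _ _⟩
  · rw [← huA]; exact e.surjective.iUnion_comp A
  · rw [← huB]; exact f.surjective.iUnion_comp B

private lemma isSetAlgebra_gridSets : IsSetAlgebra (gridSets S T) where
  empty_mem := by
    refine ⟨1, 1, fun _ => Set.univ, fun _ => Set.univ, fun _ => MeasurableSet.univ,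
      fun _ => MeasurableSet.univ, Subsingleton.pairwise, Subsingleton.pairwise,
      Set.iUnion_const _, Set.iUnion_const _, fun i j => Or.inr (disjoint_empty _)⟩
  compl_mem := by
    rintro E ⟨n, m, A, B, hA, hB, hdA, hdB, huA, huB, hdi⟩
    refine ⟨n, m, A, B, hA, hB, hdA, hdB, huA, huB, fun i j => ?_⟩
    rcases hdi i j with hsub | hdis
    · exact Or.inr (disjoint_compl_right.mono_left hsub)
    · exact Or.inl hdis.subset_compl_right
  union_mem := by
    rintro E E' ⟨n, m, A, B, hA, hB, hdA, hdB, huA, huB, hdi⟩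
      ⟨n', m', A', B', hA', hB', hdA', hdB', huA', huB', hdi'⟩
    refine mem_gridSets_of (ι := Fin n × Fin n') (κ := Fin m × Fin m')
      (A := fun p => A p.1 ∩ A' p.2) (B := fun q => B q.1 ∩ B' q.2)
      (fun p => (hA p.1).inter (hA' p.2)) (fun q => (hB q.1).inter (hB' q.2))
      ?_ ?_ ?_ ?_ ?_
    · intro p q hpq
      rcases Prod.ext_iff.not.mp hpq |> fun h => (not_and_or.mp h) with h1 | h2
      · exact (hdA h1).mono inter_subset_left inter_subset_left
      · exact (hdA' h2).mono inter_subset_right inter_subset_right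
    · intro p q hpq
      rcases Prod.ext_iff.not.mp hpq |> fun h => (not_and_or.mp h) with h1 | h2
      · exact (hdB h1).mono inter_subset_left inter_subset_left
      · exact (hdB' h2).mono inter_subset_right inter_subset_right
    · ext a
      simp only [Set.mem_iUnion, Set.mem_inter_iff, Prod.exists, Set.mem_univ, iff_true]
      have h1 : a ∈ ⋃ i, A i := huA ▸ Set.mem_univ a
      have h2 : a ∈ ⋃ i, A' i := huA' ▸ Set.mem_univ a
      obtain ⟨i, hi⟩ := Set.mem_iUnion.mp h1
      obtain ⟨i', hi'⟩ := Set.mem_iUnion.mp h2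
      exact ⟨i, i', hi, hi'⟩
    · ext b
      simp only [Set.mem_iUnion, Set.mem_inter_iff, Prod.exists, Set.mem_univ, iff_true]
      have h1 : b ∈ ⋃ j, B j := huB ▸ Set.mem_univ b
      have h2 : b ∈ ⋃ j, B' j := huB' ▸ Set.mem_univ b
      obtain ⟨j, hj⟩ := Set.mem_iUnion.mp h1
      obtain ⟨j', hj'⟩ := Set.mem_iUnion.mp h2
      exact ⟨j, j', hj, hj'⟩
    · rintro ⟨i, i'⟩ ⟨j, j'⟩
      have hsub1 : (A i ∩ A' i') ×ˢ (B j ∩ B' j') ⊆ A i ×ˢ B j :=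
        Set.prod_mono inter_subset_left inter_subset_left
      have hsub2 : (A i ∩ A' i') ×ˢ (B j ∩ B' j') ⊆ A' i' ×ˢ B' j' :=
        Set.prod_mono inter_subset_right inter_subset_right
      rcases hdi i j with hs | hd
      · exact Or.inl (le_trans (le_trans hsub1 hs) le_sup_left)
      · rcases hdi' i' j' with hs' | hd'
        · exact Or.inl (le_trans (le_trans hsub2 hs') le_sup_right)
        · exact Or.inr (Set.disjoint_union_right.mpr
            ⟨hd.mono_left hsub1, hd'.mono_left hsub2⟩)

private lemma measurableSet_of_mem_gridSets {E : Set (S × T)} (hE : E ∈ gridSets S T) :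
    MeasurableSet E := by
  obtain ⟨n, m, A, B, hA, hB, hdA, hdB, huA, huB, hdi⟩ := hE
  have hcover : (⋃ p : Fin n × Fin m, A p.1 ×ˢ B p.2) = Set.univ := by
    ext z
    simp only [Set.mem_iUnion, Set.mem_prod, Prod.exists, Set.mem_univ, iff_true]
    have h1 : z.1 ∈ ⋃ i, A i := huA ▸ Set.mem_univ _
    have h2 : z.2 ∈ ⋃ j, B j := huB ▸ Set.mem_univ _
    obtain ⟨i, hi⟩ := Set.mem_iUnion.mp h1
    obtain ⟨j, hj⟩ := Set.mem_iUnion.mp h2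
    exact ⟨i, j, hi, hj⟩
  have hE' : E = ⋃ p : Fin n × Fin m, (A p.1 ×ˢ B p.2) ∩ E := by
    rw [← Set.iUnion_inter, hcover, Set.univ_inter]
  rw [hE']
  refine MeasurableSet.iUnion fun p => ?_
  rcases hdi p.1 p.2 with hs | hd
  · rw [Set.inter_eq_left.mpr hs]; exact (hA p.1).prod (hB p.2)
  · rw [hd.inter_eq]; exact MeasurableSet.empty

private lemma generateFrom_gridSets :
    MeasurableSpace.generateFrom (gridSets S T) = Prod.instMeasurableSpace := by
  refine le_antisymm (MeasurableSpace.generateFrom_le fun E hE =>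
    measurableSet_of_mem_gridSets hE) ?_
  rw [← generateFrom_prod]
  refine MeasurableSpace.generateFrom_mono ?_
  rintro E ⟨A, hA, B, hB, rfl⟩
  have hA' : MeasurableSet A := hA
  have hB' : MeasurableSet B := hB
  refine mem_gridSets_of (ι := Bool) (κ := Bool)
    (A := fun b => if b then A else Aᶜ) (B := fun b => if b then B else Bᶜ)
    (fun b => by cases b <;> simp [hA', hA'.compl])
    (fun b => by cases b <;> simp [hB', hB'.compl])
    ?_ ?_ ?_ ?_ ?_
  · rintro ⟨⟩ ⟨⟩ h <;> simp_all [Function.onFun, disjoint_compl_left, disjoint_compl_right]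
  · rintro ⟨⟩ ⟨⟩ h <;> simp_all [Function.onFun, disjoint_compl_left, disjoint_compl_right]
  · ext a; by_cases h : a ∈ A <;> simp [h]
  · ext b; by_cases h : b ∈ B <;> simp [h]
  · rintro ⟨⟩ ⟨⟩
    · exact Or.inr (Set.Disjoint.set_prod_left (disjoint_compl_left (a := A)) _ _)
    · exact Or.inr (Set.Disjoint.set_prod_left (disjoint_compl_left (a := A)) _ _)
    · exact Or.inr (Set.Disjoint.set_prod_right (disjoint_compl_left (a := B)) _ _)
    · exact Or.inl subset_rfl

private lemma grid_sum_bound (μ ν : Measure (S × T)) [IsFiniteMeasure μ] [IsFiniteMeasure ν]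
    {E : Set (S × T)} (hEm : MeasurableSet E) {n m : ℕ}
    {A : Fin n → Set S} {B : Fin m → Set T}
    (hA : ∀ i, MeasurableSet (A i)) (hB : ∀ j, MeasurableSet (B j))
    (hdA : Pairwise (Function.onFun Disjoint A)) (hdB : Pairwise (Function.onFun Disjoint B))
    (huA : (⋃ i, A i) = Set.univ) (huB : (⋃ j, B j) = Set.univ)
    (hdi : ∀ i j, (A i ×ˢ B j ⊆ E ∨ Disjoint (A i ×ˢ B j) E)) :
    ((μ E).toReal - (ν E).toReal) + ((ν Eᶜ).toReal - (μ Eᶜ).toReal)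
      ≤ ∑ i, ∑ j, |(μ (A i ×ˢ B j)).toReal - (ν (A i ×ˢ B j)).toReal| := by
  set c : Fin n × Fin m → Set (S × T) := fun p => A p.1 ×ˢ B p.2 with hc
  have hcm : ∀ p, MeasurableSet (c p) := fun p => (hA p.1).prod (hB p.2)
  have hcd : Pairwise (Function.onFun Disjoint c) := by
    intro p q hpq
    rcases not_and_or.mp (Prod.ext_iff.not.mp hpq) with h1 | h2
    · exact Set.Disjoint.set_prod_left (hdA h1) _ _
    · exact Set.Disjoint.set_prod_right (hdB h2) _ _
  have hcu : (⋃ p, c p) = Set.univ := by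
    ext z
    simp only [Set.mem_iUnion, hc, Set.mem_prod, Prod.exists, Set.mem_univ, iff_true]
    have h1 : z.1 ∈ ⋃ i, A i := huA ▸ Set.mem_univ _
    have h2 : z.2 ∈ ⋃ j, B j := huB ▸ Set.mem_univ _
    obtain ⟨i, hi⟩ := Set.mem_iUnion.mp h1
    obtain ⟨j, hj⟩ := Set.mem_iUnion.mp h2
    exact ⟨i, j, hi, hj⟩
  have e1 := sum_toReal_measure_inter_partition μ hcm hcd hcu hEm
  have e2 := sum_toReal_measure_inter_partition ν hcm hcd hcu hEm
  have e3 := sum_toReal_measure_inter_partition μ hcm hcd hcu hEm.compl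
  have e4 := sum_toReal_measure_inter_partition ν hcm hcd hcu hEm.compl
  have key : ∀ p : Fin n × Fin m,
      ((μ (E ∩ c p)).toReal - (ν (E ∩ c p)).toReal)
        + ((ν (Eᶜ ∩ c p)).toReal - (μ (Eᶜ ∩ c p)).toReal)
      ≤ |(μ (c p)).toReal - (ν (c p)).toReal| := by
    intro p
    rcases hdi p.1 p.2 with hsub | hdis
    · have hE1 : E ∩ c p = c p := Set.inter_eq_right.mpr hsub
      have hE2 : Eᶜ ∩ c p = ∅ :=
        Set.disjoint_iff_inter_eq_empty.mp (disjoint_compl_left.mono_right hsub)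
      rw [hE1, hE2]
      simp only [measure_empty, ENNReal.toReal_zero, sub_self, add_zero]
      exact le_abs_self _
    · have hE1 : E ∩ c p = ∅ := Set.disjoint_iff_inter_eq_empty.mp hdis.symm
      have hE2 : Eᶜ ∩ c p = c p := Set.inter_eq_right.mpr hdis.subset_compl_right
      rw [hE1, hE2]
      simp only [measure_empty, ENNReal.toReal_zero, sub_self, zero_add]
      rw [abs_sub_comm]
      exact le_abs_self _
  calc ((μ E).toReal - (ν E).toReal) + ((ν Eᶜ).toReal - (μ Eᶜ).toReal)
      = ∑ p : Fin n × Fin m, (((μ (E ∩ c p)).toReal - (ν (E ∩ c p)).toReal)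
          + ((ν (Eᶜ ∩ c p)).toReal - (μ (Eᶜ ∩ c p)).toReal)) := by
        rw [Finset.sum_add_distrib, Finset.sum_sub_distrib, Finset.sum_sub_distrib,
          e1, e2, e3, e4]
    _ ≤ ∑ p : Fin n × Fin m, |(μ (c p)).toReal - (ν (c p)).toReal| :=
        Finset.sum_le_sum fun p _ => key p
    _ = ∑ i, ∑ j, |(μ (A i ×ˢ B j)).toReal - (ν (A i ×ˢ B j)).toReal| :=
        Fintype.sum_prod_type _

end GridAux

section MainProof

open scoped symmDiff

/-- Proposition 3.1, second part: for a uniformly bounded measurable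
function `h`, the difference between the integral with respect to the joint law and the
integral with respect to the product of the marginals is bounded by `2 ‖h‖_∞ β(X, Y)`,
without any absolute-continuity assumption. -/
theorem beta_mixing_integrability_bounded
    {Ω S T : Type*} [MeasurableSpace Ω] [MeasurableSpace S] [MeasurableSpace T]
    (P : Measure Ω) [IsProbabilityMeasure P]
    (X : Ω → S) (Y : Ω → T) (hX : Measurable X) (hY : Measurable Y)
    (h : S × T → ℝ) (hh : Measurable h)
    (hbdd : BddAbove (Set.range fun z => |h z|)) :
    |∫ z, h z ∂(Measure.map (fun ω => (X ω, Y ω)) P)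
        - ∫ z, h z ∂((P.map X).prod (P.map Y))|
      ≤ 2 * (⨆ z : S × T, |h z|) * betaRV P X Y := by
  classical
  have hf : Measurable (fun ω => (X ω, Y ω)) := hX.prodMk hY
  set μ : Measure (S × T) := Measure.map (fun ω => (X ω, Y ω)) P with hμ_def
  set ν : Measure (S × T) := (P.map X).prod (P.map Y) with hν_def
  haveI : IsProbabilityMeasure μ := Measure.isProbabilityMeasure_map hf.aemeasurable
  haveI : IsProbabilityMeasure (P.map X) := Measure.isProbabilityMeasure_map hX.aemeasurable
  haveI : IsProbabilityMeasure (P.map Y) := Measure.isProbabilityMeasure_map hY.aemeasurable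
  haveI : IsProbabilityMeasure ν := by rw [hν_def]; infer_instance
  have hΩne : Nonempty Ω := by
    by_contra hno
    haveI : IsEmpty Ω := not_nonempty_iff.mp hno
    have h0 : P Set.univ = 1 := measure_univ
    rw [Set.univ_eq_empty_iff.mpr ‹IsEmpty Ω›, measure_empty] at h0
    exact zero_ne_one h0
  have hSTne : Nonempty (S × T) := hΩne.map fun ω => (X ω, Y ω)
  set M : ℝ := ⨆ z : S × T, |h z| with hM_def
  have hM : ∀ z, |h z| ≤ M := fun z => le_ciSup hbdd z
  have hM0 : 0 ≤ M := hSTne.elim fun z => le_trans (abs_nonneg (h z)) (hM z)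
  obtain ⟨s, hs, h₁, h₂⟩ := hahn_decomposition (μ := μ) (ν := ν)
  set Sset : Set ℝ := { r : ℝ | ∃ (n m : ℕ) (U : Fin n → Set Ω) (V : Fin m → Set Ω),
      (∀ i, MeasurableSet[MeasurableSpace.comap X inferInstance] (U i)) ∧
      (∀ j, MeasurableSet[MeasurableSpace.comap Y inferInstance] (V j)) ∧
      Pairwise (Function.onFun Disjoint U) ∧ Pairwise (Function.onFun Disjoint V) ∧
      (⋃ i, U i) = Set.univ ∧ (⋃ j, V j) = Set.univ ∧
      r = ∑ i, ∑ j, |(P (U i ∩ V j)).toReal - (P (U i)).toReal * (P (V j)).toReal| }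
    with hSset_def
  have hbeta : betaRV P X Y = (1 / 2) * sSup Sset := rfl
  have hbdd2 : BddAbove Sset := by
    refine ⟨2, fun r hr => ?_⟩
    obtain ⟨n, m, U, V, hU, hV, hdU, hdV, huU, huV, rfl⟩ := hr
    have hU' : ∀ i, MeasurableSet (U i) := fun i => by
      obtain ⟨A, hA, hAe⟩ := MeasurableSpace.measurableSet_comap.mp (hU i)
      exact hAe ▸ hX hA
    have hV' : ∀ j, MeasurableSet (V j) := fun j => by
      obtain ⟨B, hB, hBe⟩ := MeasurableSpace.measurableSet_comap.mp (hV j)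
      exact hBe ▸ hY hB
    exact partition_sum_le_two P hU' hV' hdU hdV huU huV
  have step2 : ((μ s).toReal - (ν s).toReal) + ((ν sᶜ).toReal - (μ sᶜ).toReal)
      ≤ sSup Sset := by
    refine le_of_forall_pos_le_add fun ε hε => ?_
    have hdense := Measure.MeasureDense.of_generateFrom_isSetAlgebra_finite (μ := μ + ν)
      isSetAlgebra_gridSets generateFrom_gridSets.symm
    obtain ⟨E, hEmem, hE⟩ := hdense.approx s hs (measure_ne_top _ _) (ε / 2) (by linarith)
    have hEmeas : MeasurableSet E := measurableSet_of_mem_gridSets hEmem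
    obtain ⟨n, m', A, B, hA, hB, hdA, hdB, huA, huB, hdi⟩ := hEmem
    set r := ∑ i, ∑ j, |(μ (A i ×ˢ B j)).toReal - (ν (A i ×ˢ B j)).toReal| with hr_def
    have hmem : r ∈ Sset := by
      refine ⟨n, m', fun i => X ⁻¹' A i, fun j => Y ⁻¹' B j,
        fun i => ⟨A i, hA i, rfl⟩, fun j => ⟨B j, hB j, rfl⟩,
        fun i j hij => (hdA hij).preimage X, fun i j hij => (hdB hij).preimage Y,
        by rw [← Set.preimage_iUnion, huA, Set.preimage_univ],
        by rw [← Set.preimage_iUnion, huB, Set.preimage_univ], ?_⟩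
      refine Finset.sum_congr rfl fun i _ => Finset.sum_congr rfl fun j _ => ?_
      have k1 : P (X ⁻¹' A i ∩ Y ⁻¹' B j) = μ (A i ×ˢ B j) := by
        rw [hμ_def, Measure.map_apply hf ((hA i).prod (hB j)), Set.mk_preimage_prod]
      have k2 : P (X ⁻¹' A i) = (P.map X) (A i) := (Measure.map_apply hX (hA i)).symm
      have k3 : P (Y ⁻¹' B j) = (P.map Y) (B j) := (Measure.map_apply hY (hB j)).symm
      have k4 : ν (A i ×ˢ B j) = (P.map X) (A i) * (P.map Y) (B j) := by
        rw [hν_def, Measure.prod_prod]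
      rw [k1, k2, k3, k4, ENNReal.toReal_mul]
    have hDE := grid_sum_bound μ ν hEmeas hA hB hdA hdB huA huB hdi
    have hΔ : (((μ + ν)) (s ∆ E)).toReal < ε / 2 :=
      (ENNReal.lt_ofReal_iff_toReal_lt (measure_ne_top _ _)).mp hE
    have hΔadd : (((μ + ν)) (s ∆ E)).toReal
        = (μ (s ∆ E)).toReal + (ν (s ∆ E)).toReal := by
      rw [Measure.add_apply, ENNReal.toReal_add (measure_ne_top _ _) (measure_ne_top _ _)]
    have hsub1 : s ⊆ E ∪ (s ∆ E) := fun x hx => by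
      by_cases hxE : x ∈ E
      · exact Or.inl hxE
      · exact Or.inr (Set.mem_symmDiff.mpr (Or.inl ⟨hx, hxE⟩))
    have hsub2 : E ⊆ s ∪ (s ∆ E) := fun x hx => by
      by_cases hxs : x ∈ s
      · exact Or.inl hxs
      · exact Or.inr (Set.mem_symmDiff.mpr (Or.inr ⟨hx, hxs⟩))
    have hsub3 : sᶜ ⊆ Eᶜ ∪ (s ∆ E) := fun x hx => by
      by_cases hxE : x ∈ E
      · exact Or.inr (Set.mem_symmDiff.mpr (Or.inr ⟨hxE, hx⟩))
      · exact Or.inl hxE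
    have hsub4 : Eᶜ ⊆ sᶜ ∪ (s ∆ E) := fun x hx => by
      by_cases hxs : x ∈ s
      · exact Or.inr (Set.mem_symmDiff.mpr (Or.inl ⟨hxs, hx⟩))
      · exact Or.inl hxs
    have j1 := toReal_measure_le_of_subset_union μ hsub1
    have j2 := toReal_measure_le_of_subset_union ν hsub2
    have j3 := toReal_measure_le_of_subset_union ν hsub3
    have j4 := toReal_measure_le_of_subset_union μ hsub4
    have hrS : r ≤ sSup Sset := le_csSup hbdd2 hmem
    rw [hr_def] at hrS
    linarith
  have step1 := integral_diff_le μ ν h hh hM hs h₁ h₂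
  calc |∫ z, h z ∂μ - ∫ z, h z ∂ν|
      ≤ M * (((μ s).toReal - (ν s).toReal) + ((ν sᶜ).toReal - (μ sᶜ).toReal)) := step1
    _ ≤ M * sSup Sset := mul_le_mul_of_nonneg_left step2 hM0
    _ = 2 * M * betaRV P X Y := by rw [hbeta]; ring

end MainProof
end

section
/- Let (Ω, 𝒜, P) be a probability space, (S, 𝔖) and (T, 𝔗) measurable spaces, and (X, Y) : Ω → S × T a measurable pair such that P_{(X,Y)} ≪ P_X ⊗ P_Y with Radon–Nikodým derivative g = dP_{(X,Y)}/d(P_X ⊗ P_Y). Then β(X, Y) = (1/2) ∫_{S×T} |g − 1| d(P_X ⊗ P_Y). -/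
open MeasureTheory Real Filter Set
open scoped ENNReal NNReal

/-! ### Auxiliary machinery: grids of measurable rectangles -/

open scoped symmDiff

set_option linter.unusedSectionVars false

section Grid
variable {S T : Type*} [MeasurableSpace S] [MeasurableSpace T]

lemma grid_cells_pairwise {ι κ : Type*} {A : ι → Set S} {B : κ → Set T}
    (hdA : Pairwise (Function.onFun Disjoint A)) (hdB : Pairwise (Function.onFun Disjoint B)) :
    Pairwise (Function.onFun Disjoint (fun p : ι × κ => A p.1 ×ˢ B p.2)) := by
  intro p q hpq
  have : p.1 ≠ q.1 ∨ p.2 ≠ q.2 := by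
    by_contra h
    push_neg at h
    exact hpq (Prod.ext h.1 h.2)
  rcases this with h | h
  · exact Set.disjoint_left.2 fun z hz hz' => Set.disjoint_left.1 (hdA h) hz.1 hz'.1
  · exact Set.disjoint_left.2 fun z hz hz' => Set.disjoint_left.1 (hdB h) hz.2 hz'.2

lemma mem_grid_biUnion_iff {ι κ : Type*} {A : ι → Set S} {B : κ → Set T}
    (hdA : Pairwise (Function.onFun Disjoint A)) (hdB : Pairwise (Function.onFun Disjoint B))
    (K : Finset (ι × κ)) {z : S × T} {i : ι} {j : κ}
    (hz1 : z.1 ∈ A i) (hz2 : z.2 ∈ B j) :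
    z ∈ (⋃ p ∈ K, A p.1 ×ˢ B p.2) ↔ (i, j) ∈ K := by
  constructor
  · rintro hz
    simp only [Set.mem_iUnion] at hz
    obtain ⟨p, hp, hzp⟩ := hz
    have h1 : p.1 = i := by
      by_contra h
      exact Set.disjoint_left.1 (hdA h) hzp.1 hz1
    have h2 : p.2 = j := by
      by_contra h
      exact Set.disjoint_left.1 (hdB h) hzp.2 hz2
    rwa [← h1, ← h2, Prod.mk.eta]
  · intro h
    exact Set.mem_biUnion h ⟨hz1, hz2⟩

lemma grid_biUnion_compl {ι κ : Type*} [Fintype ι] [Fintype κ] [DecidableEq ι] [DecidableEq κ]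
    {A : ι → Set S} {B : κ → Set T}
    (hdA : Pairwise (Function.onFun Disjoint A)) (hdB : Pairwise (Function.onFun Disjoint B))
    (hUA : (⋃ i, A i) = Set.univ) (hUB : (⋃ j, B j) = Set.univ)
    (J : Finset (ι × κ)) :
    (⋃ p ∈ J, A p.1 ×ˢ B p.2)ᶜ = ⋃ p ∈ Jᶜ, A p.1 ×ˢ B p.2 := by
  ext z
  obtain ⟨i, hi⟩ : ∃ i, z.1 ∈ A i := by
    have := hUA ▸ Set.mem_univ z.1; simpa using this
  obtain ⟨j, hj⟩ : ∃ j, z.2 ∈ B j := by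
    have := hUB ▸ Set.mem_univ z.2; simpa using this
  rw [Set.mem_compl_iff, mem_grid_biUnion_iff hdA hdB J hi hj,
    mem_grid_biUnion_iff hdA hdB Jᶜ hi hj, Finset.mem_compl]

/-- A set is a grid union if it is a finite union of cells of a finite measurable
product-partition grid. -/
def IsGridUnion (t : Set (S × T)) : Prop :=
  ∃ (n m : ℕ) (A : Fin n → Set S) (B : Fin m → Set T),
    (∀ i, MeasurableSet (A i)) ∧ (∀ j, MeasurableSet (B j)) ∧
    Pairwise (Function.onFun Disjoint A) ∧ Pairwise (Function.onFun Disjoint B) ∧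
    (⋃ i, A i) = Set.univ ∧ (⋃ j, B j) = Set.univ ∧
    ∃ J : Finset (Fin n × Fin m), t = ⋃ p ∈ J, A p.1 ×ˢ B p.2

lemma IsGridUnion.measurableSet {t : Set (S × T)} (ht : IsGridUnion t) : MeasurableSet t := by
  obtain ⟨n, m, A, B, hA, hB, -, -, -, -, J, rfl⟩ := ht
  exact J.measurableSet_biUnion fun p _ => (hA p.1).prod (hB p.2)

lemma isGridUnion_of_fintype {ι κ : Type*} [Fintype ι] [Fintype κ]
    [DecidableEq ι] [DecidableEq κ] {t : Set (S × T)} (A : ι → Set S) (B : κ → Set T)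
    (hA : ∀ i, MeasurableSet (A i)) (hB : ∀ j, MeasurableSet (B j))
    (hdA : Pairwise (Function.onFun Disjoint A)) (hdB : Pairwise (Function.onFun Disjoint B))
    (hUA : (⋃ i, A i) = Set.univ) (hUB : (⋃ j, B j) = Set.univ)
    (J : Finset (ι × κ)) (ht : t = ⋃ p ∈ J, A p.1 ×ˢ B p.2) : IsGridUnion t := by
  classical
  set eι := Fintype.equivFin ι with heι
  set eκ := Fintype.equivFin κ with heκ
  refine ⟨Fintype.card ι, Fintype.card κ, A ∘ eι.symm, B ∘ eκ.symm,
    fun i => hA _, fun j => hB _,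
    fun i j hij => hdA (eι.symm.injective.ne hij),
    fun i j hij => hdB (eκ.symm.injective.ne hij), ?_, ?_,
    J.image (fun p => (eι p.1, eκ p.2)), ?_⟩
  · rw [← hUA]; exact eι.symm.surjective.iUnion_comp A
  · rw [← hUB]; exact eκ.symm.surjective.iUnion_comp B
  · ext z
    simp only [ht, Set.mem_iUnion, Finset.mem_image, Function.comp_apply, exists_prop,
      Prod.exists]
    constructor
    · rintro ⟨a, b, hab, hz⟩
      refine ⟨eι a, eκ b, ⟨a, b, hab, rfl⟩, ?_⟩
      simpa using hz
    · rintro ⟨a, b, ⟨a', b', hJ, h⟩, hz⟩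
      obtain ⟨h1, h2⟩ := Prod.mk.injEq .. ▸ h
      refine ⟨a', b', hJ, ?_⟩
      rw [← h1, ← h2] at hz
      simpa using hz

lemma refine_pairwise {α : Type*} {ι κ : Type*} {A : ι → Set α} {A' : κ → Set α}
    (hdA : Pairwise (Function.onFun Disjoint A)) (hdA' : Pairwise (Function.onFun Disjoint A')) :
    Pairwise (Function.onFun Disjoint (fun p : ι × κ => A p.1 ∩ A' p.2)) := by
  intro p q hpq
  have : p.1 ≠ q.1 ∨ p.2 ≠ q.2 := by
    by_contra h
    push_neg at h
    exact hpq (Prod.ext h.1 h.2)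
  rcases this with h | h
  · exact (hdA h).mono inter_subset_left inter_subset_left
  · exact (hdA' h).mono inter_subset_right inter_subset_right

lemma refine_cover {α : Type*} {ι κ : Type*} {A : ι → Set α} {A' : κ → Set α}
    (hUA : (⋃ i, A i) = Set.univ) (hUA' : (⋃ j, A' j) = Set.univ) :
    (⋃ p : ι × κ, A p.1 ∩ A' p.2) = Set.univ := by
  ext x
  simp only [Set.mem_iUnion, Set.mem_univ, iff_true, Prod.exists, Set.mem_inter_iff]
  obtain ⟨i, hi⟩ : ∃ i, x ∈ A i := by have := hUA ▸ Set.mem_univ x; simpa using this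
  obtain ⟨j, hj⟩ : ∃ j, x ∈ A' j := by have := hUA' ▸ Set.mem_univ x; simpa using this
  exact ⟨i, j, hi, hj⟩

lemma isSetAlgebra_isGridUnion :
    IsSetAlgebra {t : Set (S × T) | IsGridUnion t} := by
  classical
  constructor
  · -- empty
    refine isGridUnion_of_fintype (fun _ : Unit => Set.univ) (fun _ : Unit => Set.univ)
      (fun _ => MeasurableSet.univ) (fun _ => MeasurableSet.univ)
      (Subsingleton.pairwise) (Subsingleton.pairwise) (Set.iUnion_const _) (Set.iUnion_const _)
      (∅ : Finset (Unit × Unit)) (by simp)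
  · -- compl
    rintro s ⟨n, m, A, B, hA, hB, hdA, hdB, hUA, hUB, J, rfl⟩
    exact ⟨n, m, A, B, hA, hB, hdA, hdB, hUA, hUB, Jᶜ,
      grid_biUnion_compl hdA hdB hUA hUB J⟩
  · -- union
    rintro s t ⟨n, m, A, B, hA, hB, hdA, hdB, hUA, hUB, J, rfl⟩
      ⟨n', m', A', B', hA', hB', hdA', hdB', hUA', hUB', J', rfl⟩
    refine isGridUnion_of_fintype (fun p : Fin n × Fin n' => A p.1 ∩ A' p.2)
      (fun q : Fin m × Fin m' => B q.1 ∩ B' q.2)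
      (fun p => (hA p.1).inter (hA' p.2)) (fun q => (hB q.1).inter (hB' q.2))
      (refine_pairwise hdA hdA') (refine_pairwise hdB hdB')
      (refine_cover hUA hUA') (refine_cover hUB hUB')
      (Finset.univ.filter (fun pq : (Fin n × Fin n') × (Fin m × Fin m') =>
        (pq.1.1, pq.2.1) ∈ J ∨ (pq.1.2, pq.2.2) ∈ J')) ?_
    ext z
    obtain ⟨i, hi⟩ : ∃ i, z.1 ∈ A i := by have := hUA ▸ Set.mem_univ z.1; simpa using this
    obtain ⟨i', hi'⟩ : ∃ i', z.1 ∈ A' i' := by have := hUA' ▸ Set.mem_univ z.1; simpa using this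
    obtain ⟨j, hj⟩ : ∃ j, z.2 ∈ B j := by have := hUB ▸ Set.mem_univ z.2; simpa using this
    obtain ⟨j', hj'⟩ : ∃ j', z.2 ∈ B' j' := by have := hUB' ▸ Set.mem_univ z.2; simpa using this
    rw [Set.mem_union,
      mem_grid_biUnion_iff hdA hdB J hi hj,
      mem_grid_biUnion_iff hdA' hdB' J' hi' hj',
      mem_grid_biUnion_iff (refine_pairwise hdA hdA') (refine_pairwise hdB hdB') _
        (show z.1 ∈ A (i, i').1 ∩ A' (i, i').2 from ⟨hi, hi'⟩)
        (show z.2 ∈ B (j, j').1 ∩ B' (j, j').2 from ⟨hj, hj'⟩),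
      Finset.mem_filter]
    simp

lemma pairwise_bool_pair {α : Type*} (A : Set α) :
    Pairwise (Function.onFun Disjoint (fun b : Bool => if b then A else Aᶜ)) := by
  intro i j hij
  cases i <;> cases j <;> simp_all [Function.onFun] <;>
    [exact disjoint_compl_left; exact disjoint_compl_right]

lemma iUnion_bool_pair {α : Type*} (A : Set α) :
    (⋃ b : Bool, (if b then A else Aᶜ)) = Set.univ := by
  apply Set.eq_univ_of_univ_subset
  have : (⋃ b : Bool, (if b then A else Aᶜ))
      = (if true then A else Aᶜ) ⊔ (if false then A else Aᶜ) := iSup_bool_eq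
  rw [this]
  simp

lemma isGridUnion_prod {A : Set S} {B : Set T} (hA : MeasurableSet A) (hB : MeasurableSet B) :
    IsGridUnion (A ×ˢ B) := by
  classical
  refine isGridUnion_of_fintype (fun b : Bool => if b then A else Aᶜ)
    (fun b : Bool => if b then B else Bᶜ)
    (fun b => by cases b <;> simp [hA, hA.compl, hB, hB.compl])
    (fun b => by cases b <;> simp [hB, hB.compl])
    (pairwise_bool_pair A) (pairwise_bool_pair B)
    (iUnion_bool_pair A) (iUnion_bool_pair B)
    ({((true : Bool), (true : Bool))} : Finset (Bool × Bool)) ?_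
  simp

lemma generateFrom_isGridUnion :
    MeasurableSpace.generateFrom {t : Set (S × T) | IsGridUnion t} = Prod.instMeasurableSpace := by
  apply le_antisymm
  · exact MeasurableSpace.generateFrom_le fun t ht => ht.measurableSet
  · rw [← generateFrom_prod]
    apply MeasurableSpace.generateFrom_mono
    rintro u ⟨A, hA, B, hB, rfl⟩
    exact isGridUnion_prod hA hB

end Grid

section Helpers
variable {α : Type*} [MeasurableSpace α] {μ : Measure α}

lemma toReal_withDensity_eq_setIntegral (μ : Measure α)
    {f : α → ℝ} (hf : Measurable f) (h0 : ∀ x, 0 ≤ f x) {C : Set α} (hC : MeasurableSet C) :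
    ((μ.withDensity (fun x => ENNReal.ofReal (f x))) C).toReal = ∫ x in C, f x ∂μ := by
  rw [integral_eq_lintegral_of_nonneg_ae (ae_of_all _ h0) hf.aestronglyMeasurable.restrict,
    withDensity_apply _ hC]

lemma setIntegral_sub_le_symmDiff
    {f : α → ℝ} (hf : Integrable f μ) {E t : Set α} (hE : MeasurableSet E)
    (ht : MeasurableSet t) :
    (∫ x in E, f x ∂μ) - ∫ x in E ∆ t, |f x| ∂μ ≤ ∫ x in t, f x ∂μ := by
  have h1 : ∫ x in t ∩ E, f x ∂μ + ∫ x in t \ E, f x ∂μ = ∫ x in t, f x ∂μ :=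
    integral_inter_add_diff hE hf.integrableOn
  have h2 : ∫ x in E ∩ t, f x ∂μ + ∫ x in E \ t, f x ∂μ = ∫ x in E, f x ∂μ :=
    integral_inter_add_diff ht hf.integrableOn
  have hcm : ∫ x in t ∩ E, f x ∂μ = ∫ x in E ∩ t, f x ∂μ := by rw [Set.inter_comm]
  have hsd : ∫ x in E ∆ t, |f x| ∂μ
      = (∫ x in E \ t, |f x| ∂μ) + ∫ x in t \ E, |f x| ∂μ := by
    rw [Set.symmDiff_def, setIntegral_union disjoint_sdiff_sdiff (ht.diff hE)
      hf.abs.integrableOn hf.abs.integrableOn]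
  have b1 : ∫ x in E \ t, f x ∂μ ≤ ∫ x in E \ t, |f x| ∂μ :=
    integral_mono hf.integrableOn hf.abs.integrableOn fun x => le_abs_self _
  have b2 : -∫ x in t \ E, |f x| ∂μ ≤ ∫ x in t \ E, f x ∂μ := by
    rw [← integral_neg]
    exact integral_mono (hf.abs.integrableOn).neg hf.integrableOn fun x => neg_abs_le _
  linarith

end Helpers

/-- Equation (4): if the joint law of `(X, Y)` is absolutely continuous
with respect to the product of the marginals with Radon–Nikodým derivative `g`, then the
β-mixing coefficient equals half the `L¹`-distance of `g` from `1`. -/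
theorem beta_mixing_eq_total_variation
    {Ω S T : Type*} [MeasurableSpace Ω] [MeasurableSpace S] [MeasurableSpace T]
    (P : Measure Ω) [IsProbabilityMeasure P]
    (X : Ω → S) (Y : Ω → T) (hX : Measurable X) (hY : Measurable Y)
    (g : S × T → ℝ) (hg : Measurable g) (hg0 : ∀ z, 0 ≤ g z)
    (hdens : Measure.map (fun ω => (X ω, Y ω)) P
      = ((P.map X).prod (P.map Y)).withDensity (fun z => ENNReal.ofReal (g z))) :
    betaRV P X Y = (1 / 2) * ∫ z, |g z - 1| ∂((P.map X).prod (P.map Y)) := by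
  classical
  have hXY : Measurable fun ω => (X ω, Y ω) := hX.prodMk hY
  set μ := P.map X with hμdef
  set ν := P.map Y with hνdef
  haveI : IsProbabilityMeasure μ := Measure.isProbabilityMeasure_map hX.aemeasurable
  haveI : IsProbabilityMeasure ν := Measure.isProbabilityMeasure_map hY.aemeasurable
  set pr := μ.prod ν with hprdef
  set f : S × T → ℝ := fun z => g z - 1 with hfdef
  have hfmeas : Measurable f := hg.sub measurable_const
  have hfabsmeas : Measurable fun z => |f z| := hfmeas.abs
  -- integrability of g and f
  have hlint : ∫⁻ z, ENNReal.ofReal (g z) ∂pr = 1 := by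
    have h1 : Measure.map (fun ω => (X ω, Y ω)) P Set.univ = 1 := by
      rw [Measure.map_apply hXY MeasurableSet.univ]
      simp
    rw [hdens] at h1
    rwa [withDensity_apply _ MeasurableSet.univ, Measure.restrict_univ] at h1
  have hgint : Integrable g pr := by
    refine ⟨hg.aestronglyMeasurable, ?_⟩
    rw [hasFiniteIntegral_iff_ofReal (ae_of_all _ hg0), hlint]
    exact ENNReal.one_lt_top
  have hfint : Integrable f pr := hgint.sub (integrable_const 1)
  have habs : Integrable (fun z => |f z|) pr := hfint.abs
  set I := ∫ z, |f z| ∂pr with hIdef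
  have hnn : (0 : ℝ) ≤ I := integral_nonneg fun z => abs_nonneg _
  set prg := pr.withDensity (fun z => ENNReal.ofReal (g z)) with hprgdef
  set pra := pr.withDensity (fun z => ENNReal.ofReal (|f z|)) with hpradef
  haveI hprafin : IsFiniteMeasure pra := by
    rw [hpradef]; exact isFiniteMeasure_withDensity_ofReal habs.2
  have hpra_ac : pra ≪ pr := by rw [hpradef]; exact withDensity_absolutelyContinuous _ _
  have hpraC : ∀ {C : Set (S × T)}, MeasurableSet C → (pra C).toReal = ∫ z in C, |f z| ∂pr := by
    intro C hC
    rw [hpradef]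
    exact toReal_withDensity_eq_setIntegral pr hfabsmeas (fun z => abs_nonneg _) hC
  have hPjoint : ∀ {A : Set S} {B : Set T}, MeasurableSet A → MeasurableSet B →
      (P (X ⁻¹' A ∩ Y ⁻¹' B)).toReal - (P (X ⁻¹' A)).toReal * (P (Y ⁻¹' B)).toReal
        = ∫ z in A ×ˢ B, f z ∂pr := by
    intro A B hA hB
    have h1 : P (X ⁻¹' A ∩ Y ⁻¹' B) = prg (A ×ˢ B) := by
      rw [← Set.mk_preimage_prod, ← Measure.map_apply hXY (hA.prod hB), hdens]
    have h2 : (P (X ⁻¹' A)).toReal * (P (Y ⁻¹' B)).toReal = (pr (A ×ˢ B)).toReal := by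
      rw [hprdef, Measure.prod_prod, ENNReal.toReal_mul, hμdef, hνdef,
        Measure.map_apply hX hA, Measure.map_apply hY hB]
    have h3 : (pr (A ×ˢ B)).toReal = ∫ z in A ×ˢ B, (1 : ℝ) ∂pr := by
      rw [setIntegral_const, smul_eq_mul, mul_one, measureReal_def]
    rw [h1, h2, hprgdef, toReal_withDensity_eq_setIntegral pr hg hg0 (hA.prod hB), h3,
      ← integral_sub hgint.integrableOn (integrable_const 1).integrableOn]
  -- the set E where g ≥ 1
  set E := {z : S × T | 1 ≤ g z} with hEdef
  have hE : MeasurableSet E := measurableSet_le measurable_const hg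
  have hEf : ∫ z in E, f z ∂pr = ∫ z in E, |f z| ∂pr := by
    refine setIntegral_congr_fun hE fun z hz => ?_
    have hz' : 1 ≤ g z := hz
    rw [abs_of_nonneg (by simp only [hfdef]; simp; linarith)]
  have hEcf : ∫ z in Eᶜ, f z ∂pr = -∫ z in Eᶜ, |f z| ∂pr := by
    rw [← integral_neg]
    refine setIntegral_congr_fun hE.compl fun z hz => ?_
    have hz' : ¬ (1 ≤ g z) := hz
    have h0 : f z ≤ 0 := by simp only [hfdef]; simp; linarith [lt_of_not_ge hz']
    rw [abs_of_nonpos h0, neg_neg]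
  have hIsplit : ∫ z in E, |f z| ∂pr + ∫ z in Eᶜ, |f z| ∂pr = I := integral_add_compl hE habs
  -- upper bound
  have hub : ∀ (n m : ℕ) (U : Fin n → Set Ω) (V : Fin m → Set Ω),
      (∀ i, MeasurableSet[MeasurableSpace.comap X inferInstance] (U i)) →
      (∀ j, MeasurableSet[MeasurableSpace.comap Y inferInstance] (V j)) →
      Pairwise (Function.onFun Disjoint U) → Pairwise (Function.onFun Disjoint V) →
      (∑ i, ∑ j, |(P (U i ∩ V j)).toReal - (P (U i)).toReal * (P (V j)).toReal|) ≤ I := by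
    intro n m U V hU hV hdU hdV
    choose A hAm hAeq using fun i => (hU i)
    choose B hBm hBeq using fun j => (hV j)
    have hstep : ∀ i j, |(P (U i ∩ V j)).toReal - (P (U i)).toReal * (P (V j)).toReal|
        ≤ (pra (A i ×ˢ B j)).toReal := by
      intro i j
      rw [← hAeq i, ← hBeq j, hPjoint (hAm i) (hBm j), hpraC ((hAm i).prod (hBm j))]
      simpa [Real.norm_eq_abs] using
        norm_integral_le_integral_norm (μ := pr.restrict (A i ×ˢ B j)) f
    have haed : ∀ p q : Fin n × Fin m, p ≠ q →
        pra ((A p.1 ×ˢ B p.2) ∩ (A q.1 ×ˢ B q.2)) = 0 := by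
      intro p q hpq
      apply hpra_ac
      rw [Set.prod_inter_prod, hprdef, Measure.prod_prod]
      have hor : p.1 ≠ q.1 ∨ p.2 ≠ q.2 := by
        by_contra h; push_neg at h; exact hpq (Prod.ext h.1 h.2)
      rcases hor with h | h
      · have hz : μ (A p.1 ∩ A q.1) = 0 := by
          rw [hμdef, Measure.map_apply hX ((hAm p.1).inter (hAm q.1)), Set.preimage_inter,
            hAeq p.1, hAeq q.1, (hdU h).inter_eq, measure_empty]
        rw [hz, zero_mul]
      · have hz : ν (B p.2 ∩ B q.2) = 0 := by
          rw [hνdef, Measure.map_apply hY ((hBm p.2).inter (hBm q.2)), Set.preimage_inter,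
            hBeq p.2, hBeq q.2, (hdV h).inter_eq, measure_empty]
        rw [hz, mul_zero]
    calc ∑ i, ∑ j, |(P (U i ∩ V j)).toReal - (P (U i)).toReal * (P (V j)).toReal|
        ≤ ∑ i, ∑ j, (pra (A i ×ˢ B j)).toReal :=
          Finset.sum_le_sum fun i _ => Finset.sum_le_sum fun j _ => hstep i j
      _ = ∑ p : Fin n × Fin m, (pra (A p.1 ×ˢ B p.2)).toReal := by
          rw [← Finset.univ_product_univ, Finset.sum_product]
      _ = (∑ p : Fin n × Fin m, pra (A p.1 ×ˢ B p.2)).toReal := by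
          rw [ENNReal.toReal_sum fun p _ => measure_ne_top _ _]
      _ = (pra (⋃ p ∈ (Finset.univ : Finset (Fin n × Fin m)), A p.1 ×ˢ B p.2)).toReal := by
          rw [measure_biUnion_finset₀ (fun p _ q _ hpq => haed p q hpq)
            (fun p _ => ((hAm p.1).prod (hBm p.2)).nullMeasurableSet)]
      _ ≤ (pra Set.univ).toReal :=
          ENNReal.toReal_mono (measure_ne_top _ _) (measure_mono (Set.subset_univ _))
      _ = I := by rw [hpraC MeasurableSet.univ, setIntegral_univ]
  -- lower bound
  have hlb : ∀ ε : ℝ, 0 < ε →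
      ∃ (n m : ℕ) (U : Fin n → Set Ω) (V : Fin m → Set Ω),
        (∀ i, MeasurableSet[MeasurableSpace.comap X inferInstance] (U i)) ∧
        (∀ j, MeasurableSet[MeasurableSpace.comap Y inferInstance] (V j)) ∧
        Pairwise (Function.onFun Disjoint U) ∧ Pairwise (Function.onFun Disjoint V) ∧
        (⋃ i, U i) = Set.univ ∧ (⋃ j, V j) = Set.univ ∧
        I - 2 * ε ≤
          ∑ i, ∑ j, |(P (U i ∩ V j)).toReal - (P (U i)).toReal * (P (V j)).toReal| := by
    intro ε hε
    set ρ := pr + pra with hρdef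
    haveI : IsFiniteMeasure ρ := by rw [hρdef]; infer_instance
    have hdense : ρ.MeasureDense {t : Set (S × T) | IsGridUnion t} :=
      Measure.MeasureDense.of_generateFrom_isSetAlgebra_finite ρ isSetAlgebra_isGridUnion
        generateFrom_isGridUnion.symm
    obtain ⟨t, htG, hρt⟩ := hdense.approx E hE (measure_ne_top _ _) ε hε
    have htm : MeasurableSet t := IsGridUnion.measurableSet htG
    have hsmall : ∫ z in E ∆ t, |f z| ∂pr < ε := by
      rw [hρdef] at hρt
      have h1 : pra (E ∆ t) < ENNReal.ofReal ε :=
        lt_of_le_of_lt (Measure.le_iff'.1 (Measure.le_add_left le_rfl) _) hρt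
      rw [← hpraC (hE.symmDiff htm)]
      exact (ENNReal.lt_ofReal_iff_toReal_lt (measure_ne_top _ _)).1 h1
    have hb1 : (∫ z in E, f z ∂pr) - ∫ z in E ∆ t, |f z| ∂pr ≤ ∫ z in t, f z ∂pr :=
      setIntegral_sub_le_symmDiff hfint hE htm
    have hb2 : ∫ z in tᶜ, f z ∂pr ≤ (∫ z in Eᶜ, f z ∂pr) + ∫ z in E ∆ t, |f z| ∂pr := by
      have h := setIntegral_sub_le_symmDiff hfint htm.compl hE.compl
      rw [compl_symmDiff_compl, symmDiff_comm] at h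
      linarith
    obtain ⟨n, m, A, B, hAm, hBm, hdA, hdB, hUA, hUB, J, htJ⟩ := htG
    set x : Fin n → Fin m → ℝ := fun i j => ∫ z in A i ×ˢ B j, f z ∂pr with hxdef
    have hcellmeas : ∀ p : Fin n × Fin m, MeasurableSet (A p.1 ×ˢ B p.2) :=
      fun p => (hAm p.1).prod (hBm p.2)
    have hdisj := grid_cells_pairwise hdA hdB
    have hsumJ : ∀ K : Finset (Fin n × Fin m),
        (∫ z in (⋃ p ∈ K, A p.1 ×ˢ B p.2), f z ∂pr) = ∑ p ∈ K, x p.1 p.2 :=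
      fun K => integral_biUnion_finset K (fun p _ => hcellmeas p)
        (hdisj.set_pairwise _) (fun p _ => hfint.integrableOn)
    have htc : tᶜ = ⋃ p ∈ Jᶜ, A p.1 ×ˢ B p.2 := by
      rw [htJ]; exact grid_biUnion_compl hdA hdB hUA hUB J
    refine ⟨n, m, fun i => X ⁻¹' A i, fun j => Y ⁻¹' B j,
      fun i => ⟨A i, hAm i, rfl⟩, fun j => ⟨B j, hBm j, rfl⟩,
      fun i j hij => (hdA hij).preimage X, fun i j hij => (hdB hij).preimage Y,
      by rw [← Set.preimage_iUnion, hUA, Set.preimage_univ],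
      by rw [← Set.preimage_iUnion, hUB, Set.preimage_univ], ?_⟩
    have hval : ∀ i j, |(P (X ⁻¹' A i ∩ Y ⁻¹' B j)).toReal
        - (P (X ⁻¹' A i)).toReal * (P (Y ⁻¹' B j)).toReal| = |x i j| := by
      intro i j
      rw [hPjoint (hAm i) (hBm j)]
    have hIeq : I = (∫ z in E, f z ∂pr) - ∫ z in Eᶜ, f z ∂pr := by
      rw [hEf, hEcf]; linarith
    calc I - 2 * ε
        ≤ (∫ z in t, f z ∂pr) - ∫ z in tᶜ, f z ∂pr := by linarith
      _ = (∑ p ∈ J, x p.1 p.2) - ∑ p ∈ Jᶜ, x p.1 p.2 := by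
          rw [htc, htJ, hsumJ J, hsumJ Jᶜ]
      _ ≤ (∑ p ∈ J, |x p.1 p.2|) + ∑ p ∈ Jᶜ, |x p.1 p.2| := by
          have h1 : ∑ p ∈ J, x p.1 p.2 ≤ ∑ p ∈ J, |x p.1 p.2| :=
            Finset.sum_le_sum fun p _ => le_abs_self _
          have h2 : ∑ p ∈ Jᶜ, (-|x p.1 p.2|) ≤ ∑ p ∈ Jᶜ, x p.1 p.2 :=
            Finset.sum_le_sum fun p _ => neg_abs_le _
          rw [Finset.sum_neg_distrib] at h2
          linarith
      _ = ∑ p : Fin n × Fin m, |x p.1 p.2| := Finset.sum_add_sum_compl J _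
      _ = ∑ i, ∑ j, |x i j| := Fintype.sum_prod_type fun p => |x p.1 p.2|
      _ = ∑ i, ∑ j, |(P (X ⁻¹' A i ∩ Y ⁻¹' B j)).toReal
            - (P (X ⁻¹' A i)).toReal * (P (Y ⁻¹' B j)).toReal| :=
          Finset.sum_congr rfl fun i _ => Finset.sum_congr rfl fun j _ => (hval i j).symm
  -- assemble
  have main : ∀ SS : Set ℝ,
      (∀ (n m : ℕ) (U : Fin n → Set Ω) (V : Fin m → Set Ω),
        (∀ i, MeasurableSet[MeasurableSpace.comap X inferInstance] (U i)) →
        (∀ j, MeasurableSet[MeasurableSpace.comap Y inferInstance] (V j)) →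
        Pairwise (Function.onFun Disjoint U) → Pairwise (Function.onFun Disjoint V) →
        (⋃ i, U i) = Set.univ → (⋃ j, V j) = Set.univ →
        (∑ i, ∑ j, |(P (U i ∩ V j)).toReal - (P (U i)).toReal * (P (V j)).toReal|) ∈ SS) →
      (∀ r ∈ SS, r ≤ I) → sSup SS = I := by
    intro SS hmem hbound
    refine le_antisymm (Real.sSup_le hbound hnn) ?_
    refine le_of_forall_pos_le_add fun ε hε => ?_
    obtain ⟨n, m, U, V, h1, h2, h3, h4, h5, h6, h7⟩ := hlb (ε / 2) (by linarith)
    have hle := le_csSup ⟨I, hbound⟩ (hmem n m U V h1 h2 h3 h4 h5 h6)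
    linarith
  unfold betaRV betaMix
  congr 1
  exact main _
    (fun n m U V hU hV hdU hdV hu hv => ⟨n, m, U, V, hU, hV, hdU, hdV, hu, hv, rfl⟩)
    (by rintro r ⟨n, m, U, V, hU, hV, hdU, hdV, -, -, rfl⟩; exact hub n m U V hU hV hdU hdV)
end

section
/- Let ℋ be a separable real Hilbert space, X_0 an ℋ-valued random variable, and let the kernel K : [0, ∞) → [0, ∞) be supported in [0,1], zero outside, with a continuous derivative K′ on [0,1), K′ ≤ 0 and K(1) > 0. Suppose F_x(h) := P(‖X_0 − x‖ ≤ h) > 0 for all h > 0 and all x ∈ ℋ, and that the uniform small-ball limit lim_{h↓0} sup_{x∈ℋ} |F_x(hs)/F_x(h) − τ(s)| = 0 holds for a function τ : [0,1] → [0,1]. Then there exist h₀ > 0 and a constant C > 0 such that for all 0 < h ≤ h₀ and all x ∈ ℋ: E[ ( K(‖X_0 − x‖/h) / F_x(h) )³ ] ≤ C · F_x(h)^{−2}. -/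
open MeasureTheory Real Filter Set
open scoped ENNReal NNReal

/-- Small-ball probability function `F_x(h) = P(‖X₀ - x‖ ≤ h)`. -/
noncomputable def smallBall {Ω H : Type*} [MeasurableSpace Ω] [NormedAddCommGroup H]
    (P : Measure Ω) (X0 : Ω → H) (x : H) (h : ℝ) : ℝ :=
  (P {ω | ‖X0 ω - x‖ ≤ h}).toReal

/-- uniform third-moment bound for the normalized kernel:
there are `h₀ > 0` and `C > 0` such that for all `0 < h ≤ h₀` and all `x`,
`E[(K(‖X₀ - x‖/h) / F_x(h))³] ≤ C F_x(h)⁻²`. -/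
theorem kernel_third_moment_bound
    {Ω H : Type*} [MeasurableSpace Ω]
    [NormedAddCommGroup H] [InnerProductSpace ℝ H] [CompleteSpace H]
    [SecondCountableTopology H] [MeasurableSpace H] [BorelSpace H]
    (P : Measure Ω) [IsProbabilityMeasure P]
    (X0 : Ω → H) (hX0 : Measurable X0)
    (K K' : ℝ → ℝ) (hKm : Measurable K) (hK0 : ∀ u, 0 ≤ u → 0 ≤ K u)
    (hKsupp : ∀ u, 1 < u → K u = 0)
    (hK' : ∀ s ∈ Set.Ico (0 : ℝ) 1, HasDerivAt K (K' s) s)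
    (hK'cont : ContinuousOn K' (Set.Ico 0 1))
    (hK'neg : ∀ s ∈ Set.Ico (0 : ℝ) 1, K' s ≤ 0) (hK1 : 0 < K 1)
    (hFpos : ∀ (x : H) (δ : ℝ), 0 < δ → 0 < smallBall P X0 x δ)
    (τ : ℝ → ℝ) (hτ : ∀ s ∈ Set.Icc (0 : ℝ) 1, τ s ∈ Set.Icc (0 : ℝ) 1)
    (hunif : ∀ s ∈ Set.Icc (0 : ℝ) 1,
      Tendsto (fun δ : ℝ => ⨆ x : H,
          |smallBall P X0 x (δ * s) / smallBall P X0 x δ - τ s|)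
        (nhdsWithin 0 (Set.Ioi 0)) (nhds 0)) :
    ∃ h₀ C : ℝ, 0 < h₀ ∧ 0 < C ∧
      ∀ δ : ℝ, 0 < δ → δ ≤ h₀ → ∀ x : H,
        ∫ ω, (K (‖X0 ω - x‖ / δ) / smallBall P X0 x δ) ^ 3 ∂P
          ≤ C * (smallBall P X0 x δ ^ 2)⁻¹ := by
  classical
  set M := max (K 0) (K 1) with hM
  have hMpos : 0 < M := lt_of_lt_of_le hK1 (le_max_right _ _)
  have hKle : ∀ u, 0 ≤ u → K u ≤ M := by
    intro u hu
    rcases lt_or_ge u 1 with h1 | h1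
    · have hanti : AntitoneOn K (Set.Icc 0 u) := by
        apply antitoneOn_of_deriv_nonpos (convex_Icc 0 u)
        · intro s hs
          exact (hK' s ⟨hs.1, lt_of_le_of_lt hs.2 h1⟩).continuousAt.continuousWithinAt
        · intro s hs
          rw [interior_Icc] at hs
          exact (hK' s ⟨hs.1.le, hs.2.trans h1⟩).differentiableAt.differentiableWithinAt
        · intro s hs
          rw [interior_Icc] at hs
          rw [(hK' s ⟨hs.1.le, hs.2.trans h1⟩).deriv]
          exact hK'neg s ⟨hs.1.le, hs.2.trans h1⟩
      calc K u ≤ K 0 := hanti ⟨le_refl 0, hu⟩ ⟨hu, le_refl u⟩ hu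
        _ ≤ M := le_max_left _ _
    · rcases eq_or_lt_of_le h1 with h1 | h1
      · rw [← h1]; exact le_max_right _ _
      · rw [hKsupp u h1]; exact hMpos.le
  refine ⟨1, M ^ 3, one_pos, pow_pos hMpos 3, ?_⟩
  intro δ hδ _ x
  set F := smallBall P X0 x δ with hF
  have hFpos' : 0 < F := hFpos x δ hδ
  set S : Set Ω := {ω | ‖X0 ω - x‖ ≤ δ} with hSdef
  have hSm : MeasurableSet S :=
    measurableSet_le ((hX0.sub measurable_const).norm) measurable_const
  have hgmeas : Measurable fun ω => K (‖X0 ω - x‖ / δ) :=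
    hKm.comp (((hX0.sub measurable_const).norm).div_const δ)
  have hrnn : ∀ ω : Ω, (0:ℝ) ≤ ‖X0 ω - x‖ / δ := fun ω =>
    div_nonneg (norm_nonneg _) hδ.le
  have hptwise : ∀ ω, K (‖X0 ω - x‖ / δ) ^ 3 ≤ S.indicator (fun _ => M ^ 3) ω := by
    intro ω
    by_cases hω : ω ∈ S
    · rw [Set.indicator_of_mem hω]
      exact pow_le_pow_left₀ (hK0 _ (hrnn ω)) (hKle _ (hrnn ω)) 3
    · rw [Set.indicator_of_notMem hω]
      have h1 : 1 < ‖X0 ω - x‖ / δ := by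
        rw [lt_div_iff₀ hδ, one_mul]
        exact lt_of_not_ge hω
      rw [hKsupp _ h1]
      norm_num
  have hint : Integrable (fun ω => K (‖X0 ω - x‖ / δ) ^ 3) P := by
    apply (integrable_const (M ^ 3)).mono' ((hgmeas.pow_const 3).aestronglyMeasurable)
    filter_upwards with ω
    rw [Real.norm_eq_abs, abs_of_nonneg (pow_nonneg (hK0 _ (hrnn ω)) 3)]
    exact pow_le_pow_left₀ (hK0 _ (hrnn ω)) (hKle _ (hrnn ω)) 3
  have hintegral : ∫ ω, K (‖X0 ω - x‖ / δ) ^ 3 ∂P ≤ M ^ 3 * F := by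
    calc ∫ ω, K (‖X0 ω - x‖ / δ) ^ 3 ∂P
        ≤ ∫ ω, S.indicator (fun _ => M ^ 3) ω ∂P :=
          integral_mono hint ((integrable_const _).indicator hSm) hptwise
      _ = M ^ 3 * F := by
          rw [integral_indicator_const _ hSm]
          simp [hF, smallBall, hSdef, mul_comm, smul_eq_mul, measureReal_def]
  have hnonneg : 0 ≤ ∫ ω, K (‖X0 ω - x‖ / δ) ^ 3 ∂P :=
    integral_nonneg fun ω => pow_nonneg (hK0 _ (hrnn ω)) 3
  calc ∫ ω, (K (‖X0 ω - x‖ / δ) / F) ^ 3 ∂P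
      = (∫ ω, K (‖X0 ω - x‖ / δ) ^ 3 ∂P) / F ^ 3 := by
        simp_rw [div_pow]
        exact integral_div _ _
    _ ≤ (M ^ 3 * F) / F ^ 3 :=
        div_le_div_of_nonneg_right hintegral (by positivity) |>.trans_eq rfl
    _ = M ^ 3 * (F ^ 2)⁻¹ := by
        field_simp
end
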